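/- arXiv:1011.5941 — 4 statements merged into one kernel-verified Lean document; each statement's English description precedes it below -/
import Mathlib

section
/- Lindström–Gessel–Viennot lemma: Let D be an acyclic directed graph without multiple edges, with edge weights in a commutative ring, and let u = (u₁,…,u_n) and v = (v₁,…,v_n) be n-tuples of vertices. Then Σ_{π ∈ S_n} sgn(π) · F₀(u^π, v) = det[h(u_i, v_j)]_{1≤i,j≤n}, where h(u,v) is the sum of the weights of all directed paths from u to v, F₀(u,v) is the sum of weights of all non-intersecting n-tuples of paths (P₁,…,P_n) with P_i from u_i to v_i, the weight of an n-tuple of paths being the product of the path weights, and u^π = (u_{π(1)},…,u_{π(n)}). -/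
open Finset

/-- `p` is a directed path in the digraph with edge relation `E` from `u` to `v`,
recorded as its (nonempty) list of vertices. -/
def IsPathFrom {V : Type*} (E : V → V → Prop) (u v : V) (p : List V) : Prop :=
  p.Chain' E ∧ p.head? = some u ∧ p.getLast? = some v

/-- The weight of a path: the product of the weights of its edges. -/
def pathWeight {V R : Type*} [CommRing R] (w : V → V → R) (p : List V) : R :=
  (List.zipWith w p p.tail).prod

/-- `h(u,v)`: the generating function of all paths from `u` to `v`. -/
noncomputable def pathGF {V R : Type*} [CommRing R] (E : V → V → Prop) (w : V → V → R)
    (u v : V) : R :=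
  ∑ᶠ p ∈ {p : List V | IsPathFrom E u v p}, pathWeight w p

/-- An `n`-tuple of paths is non-intersecting if no two distinct component paths
share a vertex. -/
def NonIntersecting {V : Type*} {n : ℕ} (P : Fin n → List V) : Prop :=
  ∀ i j : Fin n, i ≠ j → ∀ x, x ∈ P i → x ∉ P j

/-- `F₀(u,v)`: the generating function of non-intersecting `n`-paths from `u` to `v`. -/
noncomputable def nonIntGF {V R : Type*} [CommRing R] (E : V → V → Prop) (w : V → V → R)
    (n : ℕ) (u v : Fin n → V) : R :=
  ∑ᶠ P : {P : Fin n → List V //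
      (∀ i, IsPathFrom E (u i) (v i) (P i)) ∧ NonIntersecting P},
    ∏ i, pathWeight w (P.1 i)

namespace LGV

variable {V : Type*} {R : Type*} [CommRing R] {n : ℕ}


variable {V : Type*} {R : Type*} [CommRing R]

lemma pathWeight_cons_cons (w : V → V → R) (a b : V) (l : List V) :
    pathWeight w (a :: b :: l) = w a b * pathWeight w (b :: l) := by
  simp [pathWeight]

lemma pathWeight_append (w : V → V → R) (A : List V) (x : V) (B : List V) :
    pathWeight w (A ++ x :: B) = pathWeight w (A ++ [x]) * pathWeight w (x :: B) := by
  induction A with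
  | nil => simp [pathWeight]
  | cons a A ih =>
    cases A with
    | nil => simp [pathWeight_cons_cons, pathWeight, mul_assoc]
    | cons c A' =>
      simp only [List.cons_append, pathWeight_cons_cons] at ih ⊢
      rw [ih]; ring

/-- The key weight-swapping identity. -/
lemma pathWeight_swap (w : V → V → R) (A C : List V) (x : V) (B D : List V) :
    pathWeight w (C ++ x :: B) * pathWeight w (A ++ x :: D)
      = pathWeight w (A ++ x :: B) * pathWeight w (C ++ x :: D) := by
  rw [pathWeight_append w C x B, pathWeight_append w A x D, pathWeight_append w A x B,
    pathWeight_append w C x D]; ring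

lemma duplicate_decomp {x : V} {l : List V} (h : List.Duplicate x l) :
    ∃ l₁ l₂ l₃ : List V, l = l₁ ++ x :: l₂ ++ x :: l₃ := by
  induction h with
  | cons_mem hm =>
    obtain ⟨s, t, rfl⟩ := List.append_of_mem hm
    exact ⟨[], s, t, rfl⟩
  | cons_duplicate _ ih =>
    obtain ⟨l₁, l₂, l₃, rfl⟩ := ih
    rename_i y _
    exact ⟨y :: l₁, l₂, l₃, rfl⟩

lemma nodup_of_path {E : V → V → Prop}
    (hacyclic : ∀ x : V, ∀ p : List V, IsPathFrom E x x p → p.length ≤ 1)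
    {a b : V} {p : List V} (h : IsPathFrom E a b p) : p.Nodup := by
  by_contra hnd
  obtain ⟨x, hx⟩ := List.exists_duplicate_iff_not_nodup.2 hnd
  obtain ⟨l₁, l₂, l₃, rfl⟩ := duplicate_decomp hx
  have hinf : (x :: l₂ ++ [x]) <:+: (l₁ ++ x :: l₂ ++ x :: l₃) :=
    ⟨l₁, l₃, by simp⟩
  have hpath : IsPathFrom E x x (x :: l₂ ++ [x]) := by
    refine ⟨h.1.infix hinf, rfl, ?_⟩
    rw [show (x :: l₂ ++ [x] : List V) = (x :: l₂) ++ [x] by simp,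
      List.getLast?_append_cons]
    rfl
  have := hacyclic x _ hpath
  simp at this

/-- Existence of the "last element in `U`" decomposition. -/
lemma exists_lastDecomp (U : V → Prop) (l : List V) (h : ∃ y ∈ l, U y) :
    ∃ A x B, l = A ++ x :: B ∧ U x ∧ ∀ b ∈ B, ¬ U b := by
  induction l using List.reverseRecOn with
  | nil => simp at h
  | append_singleton l' a ih =>
    by_cases ha : U a
    · exact ⟨l', a, [], by simp, ha, by simp⟩
    · have h' : ∃ y ∈ l', U y := by
        obtain ⟨y, hy, hUy⟩ := h
        rcases List.mem_append.1 hy with hy | hy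
        · exact ⟨y, hy, hUy⟩
        · simp at hy; subst hy; exact absurd hUy ha
      obtain ⟨A, x, B, rfl, hUx, hB⟩ := ih h'
      refine ⟨A, x, B ++ [a], by simp, hUx, ?_⟩
      intro b hb
      rcases List.mem_append.1 hb with hb | hb
      · exact hB b hb
      · simp at hb; subst hb; exact ha

/-- Uniqueness of the "last element in `U`" decomposition. -/
lemma lastDecomp_unique (U : V → Prop) :
    ∀ {A : List V} {x : V} {B A' : List V} {x' : V} {B' : List V},
      A ++ x :: B = A' ++ x' :: B' → U x → (∀ b ∈ B, ¬ U b) → U x' → (∀ b ∈ B', ¬ U b) →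
      A = A' ∧ x = x' ∧ B = B'
  | [], x, B, [], x', B', he, _, _, _, _ => by
    simp only [List.nil_append, List.cons.injEq] at he
    exact ⟨rfl, he.1, he.2⟩
  | [], x, B, a' :: A', x', B', he, hx, hB, hx', hB' => by
    simp only [List.nil_append, List.cons_append, List.cons.injEq] at he
    exact absurd hx' (hB x' (he.2 ▸ List.mem_append_right A' (List.mem_cons_self (a := x') (l := B'))))
  | a :: A, x, B, [], x', B', he, hx, hB, hx', hB' => by
    simp only [List.nil_append, List.cons_append, List.cons.injEq] at he
    exact absurd hx (hB' x (he.2 ▸ List.mem_append_right A (List.mem_cons_self (a := x) (l := B))))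
  | a :: A, x, B, a' :: A', x', B', he, hx, hB, hx', hB' => by
    simp only [List.cons_append, List.cons.injEq] at he
    obtain ⟨h1, h2, h3⟩ := lastDecomp_unique U he.2 hx hB hx' hB'
    exact ⟨by rw [he.1, h1], h2, h3⟩

/-- Uniqueness of the decomposition at an element, given `x ∉ B, x ∉ B'`. -/
lemma memDecomp_unique {x : V} {A B A' B' : List V}
    (he : A ++ x :: B = A' ++ x :: B') (hB : x ∉ B) (hB' : x ∉ B') :
    A = A' ∧ B = B' := by
  have := lastDecomp_unique (· = x) he rfl
    (fun b hb hbx => hB (hbx ▸ hb)) rfl (fun b hb hbx => hB' (hbx ▸ hb))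
  exact ⟨this.1, this.2.2⟩

lemma path_glue {a b c d : V} {A B C D : List V} {x : V}
    (h1 : IsPathFrom E a b (A ++ x :: B)) (h2 : IsPathFrom E c d (C ++ x :: D)) :
    IsPathFrom E c b (C ++ x :: B) := by
  obtain ⟨hc1, hh1, hl1⟩ := h1
  obtain ⟨hc2, hh2, hl2⟩ := h2
  refine ⟨?_, ?_, ?_⟩
  · -- chain
    have hxB : List.Chain' E (x :: B) := hc1.suffix ⟨A, rfl⟩
    have hCx : List.Chain' E (C ++ [x]) := hc2.prefix ⟨D, by simp⟩
    rw [show (C ++ x :: B : List V) = (C ++ [x]) ++ B by simp]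
    apply List.IsChain.append hCx (hxB.tail)
    intro p hp q hq
    have hp' : x = p := by
      rw [List.getLast?_append_cons] at hp
      simpa using hp
    subst hp'
    exact (List.isChain_cons.1 hxB).1 q hq
  · -- head
    cases C with
    | nil =>
      simp only [List.nil_append] at hh2 ⊢
      simpa using hh2
    | cons e C' =>
      simp only [List.cons_append, List.head?_cons] at hh2 ⊢
      exact hh2
  · rw [List.getLast?_append_cons] at hl1 ⊢
    exact hl1

/-- `P i` meets some other path. -/
def Meets (P : Fin n → List V) (i : Fin n) : Prop :=
  ∃ j, j ≠ i ∧ ∃ y, y ∈ P i ∧ y ∈ P j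

/-- The canonical tail-swap relation between intersecting configurations. -/
def LGVSpec (c c' : Σ _ : Equiv.Perm (Fin n), Fin n → List V) : Prop :=
  ∃ (i0 j0 : Fin n) (x : V) (A B C D : List V),
    (Meets c.2 i0 ∧ ∀ k, Meets c.2 k → i0 ≤ k) ∧
    (c.2 i0 = A ++ x :: B ∧ (∃ m, m ≠ i0 ∧ x ∈ c.2 m) ∧
      ∀ b ∈ B, ¬ ∃ m, m ≠ i0 ∧ b ∈ c.2 m) ∧
    (j0 ≠ i0 ∧ x ∈ c.2 j0 ∧ ∀ m, m ≠ i0 → x ∈ c.2 m → j0 ≤ m) ∧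
    (c.2 j0 = C ++ x :: D ∧ x ∉ C ∧ x ∉ D) ∧
    c' = ⟨c.1 * Equiv.swap i0 j0,
      Function.update (Function.update c.2 i0 (C ++ x :: B)) j0 (A ++ x :: D)⟩

lemma exists_spec (c : Σ _ : Equiv.Perm (Fin n), Fin n → List V)
    (hni : ¬ NonIntersecting c.2) (hnd : ∀ i, (c.2 i).Nodup) :
    ∃ c', LGVSpec c c' := by
  classical
  set P := c.2 with hP
  unfold NonIntersecting at hni
  push_neg at hni
  obtain ⟨i, j, hij, x', hxi, hxj⟩ := hni
  have hsne : (univ.filter (Meets P)).Nonempty :=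
    ⟨i, mem_filter.2 ⟨mem_univ _, ⟨j, hij.symm, x', hxi, hxj⟩⟩⟩
  set i0 := (univ.filter (Meets P)).min' hsne with hi0
  have hi0meets : Meets P i0 := (mem_filter.1 ((univ.filter (Meets P)).min'_mem hsne)).2
  have hi0min : ∀ k, Meets P k → i0 ≤ k := fun k hk =>
    Finset.min'_le _ _ (mem_filter.2 ⟨mem_univ _, hk⟩)
  obtain ⟨j', hj'i0, y, hyi0, hyj'⟩ := hi0meets
  have hUex : ∃ y ∈ P i0, ∃ m, m ≠ i0 ∧ y ∈ P m := ⟨y, hyi0, j', hj'i0, hyj'⟩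
  obtain ⟨A, x, B, hdec, hUx, hBU⟩ :=
    exists_lastDecomp (fun y => ∃ m, m ≠ i0 ∧ y ∈ P m) (P i0) hUex
  have hj0ne : (univ.filter (fun m => m ≠ i0 ∧ x ∈ P m)).Nonempty := by
    obtain ⟨m, hm1, hm2⟩ := hUx
    exact ⟨m, mem_filter.2 ⟨mem_univ _, hm1, hm2⟩⟩
  set j0 := (univ.filter (fun m => m ≠ i0 ∧ x ∈ P m)).min' hj0ne with hj0
  have hj0prop : j0 ≠ i0 ∧ x ∈ P j0 :=
    (mem_filter.1 ((univ.filter _).min'_mem hj0ne)).2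
  have hj0min : ∀ m, m ≠ i0 → x ∈ P m → j0 ≤ m := fun m h1 h2 =>
    Finset.min'_le _ _ (mem_filter.2 ⟨mem_univ _, h1, h2⟩)
  obtain ⟨C, D, hCD⟩ := List.append_of_mem hj0prop.2
  have hndj0 : (C ++ x :: D).Nodup := hCD ▸ hnd j0
  have hxD : x ∉ D := by
    have := (List.nodup_cons.1 (hndj0.of_append_right)).1
    exact this
  have hxC : x ∉ C := fun hc =>
    (List.disjoint_of_nodup_append hndj0) hc (List.mem_cons_self (a := x) (l := D))
  exact ⟨_, i0, j0, x, A, B, C, D, ⟨⟨j', hj'i0, y, hyi0, hyj'⟩, hi0min⟩,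
    ⟨hdec, hUx, hBU⟩, ⟨hj0prop.1, hj0prop.2, hj0min⟩, ⟨hCD, hxC, hxD⟩, rfl⟩

lemma spec_determ {c c₁ c₂ : Σ _ : Equiv.Perm (Fin n), Fin n → List V}
    (hnd : ∀ i, (c.2 i).Nodup) (h1 : LGVSpec c c₁) (h2 : LGVSpec c c₂) : c₁ = c₂ := by
  obtain ⟨i0, j0, x, A, B, C, D, ⟨hm, hmin⟩, ⟨hdec, hUx, hBU⟩, ⟨hji, hxj, hjmin⟩,
    ⟨hCD, hxC, hxD⟩, rfl⟩ := h1
  obtain ⟨i0', j0', x', A', B', C', D', ⟨hm', hmin'⟩, ⟨hdec', hUx', hBU'⟩, ⟨hji', hxj', hjmin'⟩,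
    ⟨hCD', hxC', hxD'⟩, rfl⟩ := h2
  have hi : i0 = i0' := le_antisymm (hmin _ hm') (hmin' _ hm)
  subst hi
  obtain ⟨hA, hx, hB⟩ :=
    lastDecomp_unique (fun y => ∃ m, m ≠ i0 ∧ y ∈ c.2 m)
      (hdec ▸ hdec') hUx hBU hUx' hBU'
  subst hA; subst hx; subst hB
  have hj : j0 = j0' := le_antisymm (hjmin _ hji' hxj') (hjmin' _ hji hxj)
  subst hj
  obtain ⟨hC, hD⟩ := memDecomp_unique (hCD ▸ hCD') hxD hxD'
  subst hC; subst hD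
  rfl

lemma spec_symm {c c' : Σ _ : Equiv.Perm (Fin n), Fin n → List V}
    (hnd : ∀ i, (c.2 i).Nodup) (h : LGVSpec c c') : LGVSpec c' c := by
  obtain ⟨σ, P⟩ := c
  obtain ⟨i0, j0, x, A, B, C, D, ⟨hm, hmin⟩, ⟨hdec, hUx, hBU⟩, ⟨hji, hxj, hjmin⟩,
    ⟨hCD, hxC, hxD⟩, rfl⟩ := h
  simp only at hdec hUx hBU hm hmin hji hxj hjmin hCD hxC hxD hnd ⊢
  set Q := Function.update (Function.update P i0 (C ++ x :: B)) j0 (A ++ x :: D) with hQ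
  have hij : i0 ≠ j0 := hji.symm
  have hxPi0 : x ∈ P i0 := by rw [hdec]; exact List.mem_append_right A (List.mem_cons_self (a := x) (l := B))
  have hi0j0 : i0 < j0 := by
    refine lt_of_le_of_ne (hmin j0 ⟨i0, hij, x, hxj, hxPi0⟩) hij
  have hQi0 : Q i0 = C ++ x :: B := by
    rw [hQ, Function.update_of_ne hij, Function.update_self]
  have hQj0 : Q j0 = A ++ x :: D := by rw [hQ, Function.update_self]
  have hQk : ∀ k, k ≠ i0 → k ≠ j0 → Q k = P k := fun k h1 h2 => by
    rw [hQ, Function.update_of_ne h2, Function.update_of_ne h1]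
  -- nodup facts
  have ndPi0 : (A ++ x :: B).Nodup := hdec ▸ hnd i0
  have hdisjAB := List.disjoint_of_nodup_append ndPi0
  have hxA : x ∉ A := fun hc => hdisjAB hc (List.mem_cons_self (a := x) (l := B))
  have hxB : x ∉ B := (List.nodup_cons.1 ndPi0.of_append_right).1
  -- membership transfer: vertices of Q i0 / Q j0 lie in P j0 / P i0
  have hmemQi0 : ∀ y ∈ Q i0, y ∈ P j0 ∨ y ∈ P i0 := by
    intro y hy
    rw [hQi0] at hy
    rcases List.mem_append.1 hy with hy | hy
    · exact Or.inl (by rw [hCD]; exact List.mem_append_left _ hy)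
    · rcases List.mem_cons.1 hy with rfl | hy
      · exact Or.inl hxj
      · exact Or.inr (by rw [hdec]; exact List.mem_append_right _ (List.mem_cons_of_mem _ hy))
  have hmemQj0 : ∀ y ∈ Q j0, y ∈ P i0 ∨ y ∈ P j0 := by
    intro y hy
    rw [hQj0] at hy
    rcases List.mem_append.1 hy with hy | hy
    · exact Or.inl (by rw [hdec]; exact List.mem_append_left _ hy)
    · rcases List.mem_cons.1 hy with rfl | hy
      · exact Or.inl hxPi0
      · exact Or.inr (by rw [hCD]; exact List.mem_append_right _ (List.mem_cons_of_mem _ hy))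
  have hxQi0 : x ∈ Q i0 := by
    rw [hQi0]; exact List.mem_append_right C (List.mem_cons_self (a := x) (l := B))
  have hxQj0 : x ∈ Q j0 := by
    rw [hQj0]; exact List.mem_append_right A (List.mem_cons_self (a := x) (l := D))
  refine ⟨i0, j0, x, C, B, A, D, ⟨⟨j0, hji.symm.symm, x, hxQi0, hxQj0⟩, ?_⟩,
    ⟨hQi0, ⟨j0, hji, hxQj0⟩, ?_⟩, ⟨hji, hxQj0, ?_⟩, ⟨hQj0, hxA, hxD⟩, ?_⟩
  · -- minimality of i0 for Q
    dsimp only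
    intro k hk
    by_contra hik
    push_neg at hik
    have hki0 : k ≠ i0 := ne_of_lt hik
    have hkj0 : k ≠ j0 := ne_of_lt (lt_trans hik hi0j0)
    obtain ⟨j, hjk, y, hyk, hyj⟩ := hk
    rw [hQk k hki0 hkj0] at hyk
    have : Meets P k := by
      by_cases hj1 : j = i0
      · rw [hj1] at hyj
        rcases hmemQi0 y hyj with hy | hy
        · exact ⟨j0, hkj0.symm, y, hyk, hy⟩
        · exact ⟨i0, hki0.symm, y, hyk, hy⟩
      · by_cases hj2 : j = j0
        · rw [hj2] at hyj
          rcases hmemQj0 y hyj with hy | hy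
          · exact ⟨i0, hki0.symm, y, hyk, hy⟩
          · exact ⟨j0, hkj0.symm, y, hyk, hy⟩
        · rw [hQk j hj1 hj2] at hyj
          exact ⟨j, hjk, y, hyk, hyj⟩
    exact absurd (hmin k this) (not_le.2 hik)
  · -- B avoids all other new paths
    dsimp only
    intro b hb
    rintro ⟨m, hmi, hbm⟩
    by_cases hm2 : m = j0
    · rw [hm2] at hbm
      rw [hQj0] at hbm
      rcases List.mem_append.1 hbm with hb' | hb'
      · exact hdisjAB hb' (List.mem_cons_of_mem _ hb)
      · rcases List.mem_cons.1 hb' with rfl | hb'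
        · exact hBU b hb ⟨j0, hji, hxj⟩
        · exact hBU b hb ⟨j0, hji,
            (by rw [hCD]; exact List.mem_append_right _ (List.mem_cons_of_mem _ hb'))⟩
    · rw [hQk m hmi hm2] at hbm
      exact hBU b hb ⟨m, hmi, hbm⟩
  · -- minimality of j0 for Q
    dsimp only
    intro m hmi hxm
    by_cases hm2 : m = j0
    · exact le_of_eq hm2.symm
    · rw [hQk m hmi hm2] at hxm
      exact hjmin m hmi hxm
  · -- the swap of the swap is the original configuration
    refine Sigma.ext ?_ (heq_of_eq ?_)
    · simp only
      rw [mul_assoc, Equiv.swap_mul_self, mul_one]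
    · simp only
      funext k
      by_cases h1 : k = j0
      · subst h1
        rw [Function.update_self, hCD]
      · rw [Function.update_of_ne h1]
        by_cases h2 : k = i0
        · subst h2
          rw [Function.update_self, hdec]
        · rw [Function.update_of_ne h2, hQk k h2 h1]

lemma spec_props {E : V → V → Prop} (w : V → V → R) (u v : Fin n → V)
    {c c' : Σ _ : Equiv.Perm (Fin n), Fin n → List V}
    (h : LGVSpec c c')
    (hpaths : ∀ i, IsPathFrom E (u (c.1 i)) (v i) (c.2 i)) :
    (∀ i, IsPathFrom E (u (c'.1 i)) (v i) (c'.2 i)) ∧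
      ¬ NonIntersecting c'.2 ∧
      (∏ i, pathWeight w (c'.2 i)) = (∏ i, pathWeight w (c.2 i)) ∧
      Equiv.Perm.sign c'.1 = - Equiv.Perm.sign c.1 ∧
      c'.1 ≠ c.1 := by
  obtain ⟨σ, P⟩ := c
  obtain ⟨i0, j0, x, A, B, C, D, ⟨hm, hmin⟩, ⟨hdec, hUx, hBU⟩, ⟨hji, hxj, hjmin⟩,
    ⟨hCD, hxC, hxD⟩, rfl⟩ := h
  simp only at hdec hxj hCD hpaths ⊢
  set Q := Function.update (Function.update P i0 (C ++ x :: B)) j0 (A ++ x :: D) with hQ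
  have hij : i0 ≠ j0 := hji.symm
  have hQi0 : Q i0 = C ++ x :: B := by
    rw [hQ, Function.update_of_ne hij, Function.update_self]
  have hQj0 : Q j0 = A ++ x :: D := by rw [hQ, Function.update_self]
  have hQk : ∀ k, k ≠ i0 → k ≠ j0 → Q k = P k := fun k h1 h2 => by
    rw [hQ, Function.update_of_ne h2, Function.update_of_ne h1]
  have hτi0 : (σ * Equiv.swap i0 j0) i0 = σ j0 := by
    rw [Equiv.Perm.mul_apply, Equiv.swap_apply_left]
  have hτj0 : (σ * Equiv.swap i0 j0) j0 = σ i0 := by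
    rw [Equiv.Perm.mul_apply, Equiv.swap_apply_right]
  have hτk : ∀ k, k ≠ i0 → k ≠ j0 → (σ * Equiv.swap i0 j0) k = σ k := fun k h1 h2 => by
    rw [Equiv.Perm.mul_apply, Equiv.swap_apply_of_ne_of_ne h1 h2]
  have hp1 : IsPathFrom E (u (σ i0)) (v i0) (A ++ x :: B) := hdec ▸ hpaths i0
  have hp2 : IsPathFrom E (u (σ j0)) (v j0) (C ++ x :: D) := hCD ▸ hpaths j0
  refine ⟨?_, ?_, ?_, ?_, ?_⟩
  · -- paths
    intro k
    by_cases h1 : k = i0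
    · subst h1
      rw [hτi0, hQi0]
      exact path_glue hp1 hp2
    · by_cases h2 : k = j0
      · subst h2
        rw [hτj0, hQj0]
        exact path_glue hp2 hp1
      · rw [hτk k h1 h2, hQk k h1 h2]
        exact hpaths k
  · -- still intersecting
    intro hNI
    refine hNI i0 j0 hij x ?_ ?_
    · rw [hQi0]; exact List.mem_append_right C (List.mem_cons_self (a := x) (l := B))
    · rw [hQj0]; exact List.mem_append_right A (List.mem_cons_self (a := x) (l := D))
  · -- weights
    rw [← Finset.mul_prod_erase univ _ (mem_univ j0),
        ← Finset.mul_prod_erase univ (fun i => pathWeight w (P i)) (mem_univ j0),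
        ← Finset.mul_prod_erase _ _ (Finset.mem_erase.2 ⟨hij, mem_univ i0⟩),
        ← Finset.mul_prod_erase _ (fun i => pathWeight w (P i))
          (Finset.mem_erase.2 ⟨hij, mem_univ i0⟩)]
    have hrest : ∏ k ∈ (univ.erase j0).erase i0, pathWeight w (Q k)
        = ∏ k ∈ (univ.erase j0).erase i0, pathWeight w (P k) := by
      refine Finset.prod_congr rfl fun k hk => ?_
      simp only [Finset.mem_erase] at hk
      rw [hQk k hk.1 hk.2.1]
    rw [hrest, hQj0, hQi0, hdec, hCD, ← mul_assoc, ← mul_assoc]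
    congr 1
    rw [mul_comm (pathWeight w (A ++ x :: D)), pathWeight_swap w A C x B D,
      mul_comm]
  · -- sign
    simp [Equiv.Perm.sign_mul, Equiv.Perm.sign_swap hij]
  · -- permutation changes
    intro he
    have : σ j0 = σ i0 := by rw [← hτi0, he]
    exact hij (σ.injective this).symm

end LGV

/-- Lindström–Gessel–Viennot lemma:
`Σ_{π ∈ S_n} sgn(π) F₀(u^π, v) = det[h(u_i, v_j)]`. -/
theorem lindstrom_gessel_viennot {V R : Type*} [CommRing R]
    (E : V → V → Prop) (w : V → V → R)
    (hacyclic : ∀ x : V, ∀ p : List V, IsPathFrom E x x p → p.length ≤ 1)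
    (hfin : ∀ a b : V, {p : List V | IsPathFrom E a b p}.Finite)
    (n : ℕ) (u v : Fin n → V) :
    ∑ σ : Equiv.Perm (Fin n),
        (Equiv.Perm.sign σ : ℤ) • nonIntGF E w n (u ∘ σ) v =
      Matrix.det (Matrix.of fun i j : Fin n => pathGF E w (u i) (v j)) := by
  classical
  -- path generating function as a finite sum
  have hGF : ∀ a b : V, pathGF E w a b = ∑ p ∈ (hfin a b).toFinset, pathWeight w p := by
    intro a b
    rw [pathGF]
    exact finsum_mem_eq_finite_toFinset_sum _ (hfin a b)
  -- the finset of path tuples associated to a permutation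
  set piF : Equiv.Perm (Fin n) → Finset (Fin n → List V) :=
    fun σ => Fintype.piFinset fun i => (hfin (u (σ i)) (v i)).toFinset with hpiF
  have hmem_piF : ∀ σ (P : Fin n → List V),
      P ∈ piF σ ↔ ∀ i, IsPathFrom E (u (σ i)) (v i) (P i) := by
    intro σ P
    simp [hpiF, Fintype.mem_piFinset, Set.Finite.mem_toFinset]
  -- non-intersecting generating function as a finite sum
  have hNIgf : ∀ σ : Equiv.Perm (Fin n), nonIntGF E w n (u ∘ σ) v =
      ∑ P ∈ (piF σ).filter NonIntersecting, ∏ i, pathWeight w (P i) := by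
    intro σ
    have hset : {P : Fin n → List V |
        (∀ i, IsPathFrom E ((u ∘ σ) i) (v i) (P i)) ∧ NonIntersecting P}.Finite := by
      refine Set.Finite.subset ((piF σ).finite_toSet) ?_
      intro P hP
      simp only [Finset.mem_coe]
      exact (hmem_piF σ P).2 hP.1
    have h1 : nonIntGF E w n (u ∘ σ) v
        = ∑ᶠ P ∈ {P : Fin n → List V |
            (∀ i, IsPathFrom E ((u ∘ σ) i) (v i) (P i)) ∧ NonIntersecting P},
            ∏ i, pathWeight w (P i) := by
      rw [nonIntGF]
      exact finsum_subtype_eq_finsum_cond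
        (f := fun P : Fin n → List V => ∏ i, pathWeight w (P i))
        (fun P : Fin n → List V =>
          (∀ i, IsPathFrom E ((u ∘ σ) i) (v i) (P i)) ∧ NonIntersecting P)
    rw [h1, finsum_mem_eq_finite_toFinset_sum _ hset]
    refine Finset.sum_congr ?_ fun _ _ => rfl
    ext P
    simp only [Set.Finite.mem_toFinset, Set.mem_setOf_eq, Finset.mem_filter, hmem_piF,
      Function.comp_apply]
  -- expand the determinant
  rw [Matrix.det_apply]
  have hprod : ∀ σ : Equiv.Perm (Fin n),
      ∏ i, (Matrix.of fun i j : Fin n => pathGF E w (u i) (v j)) (σ i) i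
        = ∑ P ∈ piF σ, ∏ i, pathWeight w (P i) := by
    intro σ
    simp only [Matrix.of_apply, hGF]
    exact Finset.prod_univ_sum _ _
  -- the global sum over configurations
  set F : (Σ _ : Equiv.Perm (Fin n), Fin n → List V) → R :=
    fun c => ((Equiv.Perm.sign c.1 : ℤ)) • ∏ i, pathWeight w (c.2 i) with hF
  have hRHS : ∑ σ : Equiv.Perm (Fin n),
      Equiv.Perm.sign σ • ∏ i, (Matrix.of fun i j : Fin n => pathGF E w (u i) (v j)) (σ i) i
      = ∑ c ∈ (univ : Finset (Equiv.Perm (Fin n))).sigma piF, F c := by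
    rw [Finset.sum_sigma]
    refine Finset.sum_congr rfl fun σ _ => ?_
    rw [hprod, Finset.smul_sum]
    rfl
  rw [hRHS]
  -- split into non-intersecting and intersecting configurations
  rw [← Finset.sum_filter_add_sum_filter_not ((univ : Finset (Equiv.Perm (Fin n))).sigma piF)
      (fun c => NonIntersecting c.2) F]
  -- the intersecting part cancels
  have hzero : ∑ c ∈ ((univ : Finset (Equiv.Perm (Fin n))).sigma piF).filter
      (fun c => ¬ NonIntersecting c.2), F c = 0 := by
    set s0 := ((univ : Finset (Equiv.Perm (Fin n))).sigma piF).filter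
      (fun c => ¬ NonIntersecting c.2) with hs0
    have hmem : ∀ c ∈ s0,
        (∀ i, IsPathFrom E (u (c.1 i)) (v i) (c.2 i)) ∧ ¬ NonIntersecting c.2 := by
      intro c hc
      rw [hs0, Finset.mem_filter, Finset.mem_sigma] at hc
      exact ⟨(hmem_piF c.1 c.2).1 hc.1.2, hc.2⟩
    have hndc : ∀ c ∈ s0, ∀ i, (c.2 i).Nodup := fun c hc i =>
      LGV.nodup_of_path hacyclic ((hmem c hc).1 i)
    set g : ∀ c ∈ s0, (Σ _ : Equiv.Perm (Fin n), Fin n → List V) :=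
      fun c hc => Classical.choose (LGV.exists_spec c (hmem c hc).2 (hndc c hc)) with hg
    have hgspec : ∀ c hc, LGV.LGVSpec c (g c hc) :=
      fun c hc => Classical.choose_spec (LGV.exists_spec c (hmem c hc).2 (hndc c hc))
    have hprops : ∀ c hc,
        (∀ i, IsPathFrom E (u ((g c hc).1 i)) (v i) ((g c hc).2 i)) ∧
        ¬ NonIntersecting (g c hc).2 ∧
        (∏ i, pathWeight w ((g c hc).2 i)) = (∏ i, pathWeight w (c.2 i)) ∧
        Equiv.Perm.sign (g c hc).1 = - Equiv.Perm.sign c.1 ∧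
        (g c hc).1 ≠ c.1 :=
      fun c hc => LGV.spec_props w u v (hgspec c hc) ((hmem c hc).1)
    have g_mem : ∀ c hc, g c hc ∈ s0 := by
      intro c hc
      rw [hs0, Finset.mem_filter, Finset.mem_sigma]
      exact ⟨⟨Finset.mem_univ _, (hmem_piF _ _).2 ((hprops c hc).1)⟩, (hprops c hc).2.1⟩
    refine Finset.sum_involution g ?_ ?_ g_mem ?_
    · intro c hc
      have h3 := (hprops c hc).2.2.1
      have h4 := (hprops c hc).2.2.2.1
      rw [hF]
      simp only
      rw [h3, h4]
      push_cast
      rw [neg_smul, add_neg_cancel]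
    · intro c hc _ heq
      exact (hprops c hc).2.2.2.2 (congrArg Sigma.fst heq)
    · intro c hc
      exact LGV.spec_determ (hndc _ (g_mem c hc)) (hgspec _ (g_mem c hc))
        (LGV.spec_symm (hndc c hc) (hgspec c hc))
  rw [hzero, add_zero]
  -- the non-intersecting part is the left-hand side
  have hsplit : ((univ : Finset (Equiv.Perm (Fin n))).sigma piF).filter
      (fun c => NonIntersecting c.2)
      = (univ : Finset (Equiv.Perm (Fin n))).sigma
          (fun σ => (piF σ).filter NonIntersecting) := by
    ext c
    simp only [Finset.mem_filter, Finset.mem_sigma, Finset.mem_univ, true_and]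
  rw [hsplit, Finset.sum_sigma]
  refine Finset.sum_congr rfl fun σ _ => ?_
  rw [hNIgf σ, Finset.smul_sum]
end

section
/- LGV corollary for compatible endpoints: Let D be an acyclic digraph with weighted edges, u = (u₁,…,u_n) and v = (v₁,…,v_n) n-tuples of vertices such that u is D-compatible with v, meaning every path from u_i to v_l intersects every path from u_j to v_k whenever i < j and k < l. Then the sum of weights of non-intersecting n-tuples of paths from u to v equals det[h(u_i, v_j)]_{1≤i,j≤n}, where h(u,v) is the weighted path count from u to v. -/
open Finset

namespace LGVAux
variable {V : Type*} {R : Type*} [CommRing R]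

theorem pathWeight_cons_cons (w : V → V → R) (a b : V) (l : List V) :
    pathWeight w (a :: b :: l) = w a b * pathWeight w (b :: l) := by
  simp [pathWeight]

theorem pathWeight_join (w : V → V → R) (p q : List V) (x : V)
    (hp : p.getLast? = some x) (hq : q.head? = some x) :
    pathWeight w (p ++ q.tail) = pathWeight w p * pathWeight w q := by
  obtain ⟨t, rfl⟩ : ∃ t, q = x :: t := by
    cases q with
    | nil => simp at hq
    | cons a t => exact ⟨t, by simpa using (by simpa using hq : a = x) ▸ rfl⟩
  induction p with
  | nil => simp at hp
  | cons a p ih =>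
    cases p with
    | nil =>
      obtain rfl : a = x := by simpa using hp
      simp [pathWeight]
    | cons b p' =>
      rw [List.getLast?_cons_cons] at hp
      have h3 := ih hp
      simp only [List.cons_append] at h3 ⊢
      rw [pathWeight_cons_cons, pathWeight_cons_cons, h3]
      ring

theorem isPathFrom_join {E : V → V → Prop} {a b x : V} {p q : List V}
    (h₁ : IsPathFrom E a x p) (h₂ : IsPathFrom E x b q) :
    IsPathFrom E a b (p ++ q.tail) := by
  obtain ⟨hc₁, hh₁, hl₁⟩ := h₁
  obtain ⟨hc₂, hh₂, hl₂⟩ := h₂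
  obtain ⟨t, rfl⟩ : ∃ t, q = x :: t := by
    cases q with
    | nil => simp at hh₂
    | cons c t => exact ⟨t, by simpa using (by simpa using hh₂ : c = x) ▸ rfl⟩
  rw [List.Chain', List.isChain_cons] at hc₂
  refine ⟨?_, ?_, ?_⟩
  · rw [List.Chain', List.isChain_append]
    refine ⟨hc₁, hc₂.2, ?_⟩
    intro y hy z hz
    rw [hl₁] at hy
    obtain rfl : x = y := by simpa using hy
    exact hc₂.1 z hz
  · rw [List.head?_append]
    cases p with
    | nil => simp at hh₁
    | cons a' p' => simpa using hh₁
  · cases t with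
    | nil =>
      obtain rfl : x = b := by simpa using hl₂
      simpa using hl₁
    | cons c t' =>
      rw [List.getLast?_append]
      rw [List.getLast?_cons_cons] at hl₂
      simp [hl₂]

variable [DecidableEq V]
/-- prefix of `p` up to and including the first occurrence of `x`. -/
def pref (p : List V) (x : V) : List V := p.take (p.idxOf x + 1)

/-- suffix of `p` from the first occurrence of `x` (inclusive). -/
def suff (p : List V) (x : V) : List V := p.drop (p.idxOf x)

theorem not_mem_take_indexOf (p : List V) (x : V) : x ∉ p.take (p.idxOf x) := by
  induction p with
  | nil => simp
  | cons a t ih =>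
    by_cases hxa : x = a
    · subst hxa; simp [List.idxOf_cons_self]
    · rw [List.idxOf_cons_ne _ (by simpa using Ne.symm hxa)]
      simp only [List.take_succ_cons, List.mem_cons]
      rintro (h | h)
      · exact hxa h
      · exact ih h

theorem indexOf_lt (p : List V) (x : V) (h : x ∈ p) : p.idxOf x < p.length :=
  List.idxOf_lt_length_iff.2 h

theorem pref_eq (p : List V) (x : V) (h : x ∈ p) :
    pref p x = p.take (p.idxOf x) ++ [x] := by
  rw [pref, List.take_succ]
  congr 1
  rw [List.getElem?_eq_getElem (indexOf_lt p x h)]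
  simp [List.getElem_idxOf]

theorem suff_eq (p : List V) (x : V) (h : x ∈ p) :
    suff p x = x :: p.drop (p.idxOf x + 1) := by
  rw [suff, List.drop_eq_getElem_cons (indexOf_lt p x h)]
  simp [List.getElem_idxOf]

theorem pref_append_tail_suff (p : List V) (x : V) :
    pref p x ++ (suff p x).tail = p := by
  rw [pref, suff, List.tail_drop, List.take_append_drop]

theorem mem_pref_self (p : List V) (x : V) (h : x ∈ p) : x ∈ pref p x := by
  rw [pref_eq p x h]; simp

theorem getLast?_pref (p : List V) (x : V) (h : x ∈ p) :
    (pref p x).getLast? = some x := by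
  rw [pref_eq p x h, List.getLast?_append]; simp

theorem head?_suff (p : List V) (x : V) (h : x ∈ p) :
    (suff p x).head? = some x := by
  rw [suff_eq p x h]; simp

theorem head?_pref (p : List V) (x : V) : (pref p x).head? = p.head? := by
  rw [pref, List.head?_take]; simp

theorem length_pref (p : List V) (x : V) (h : x ∈ p) :
    (pref p x).length = p.idxOf x + 1 := by
  rw [pref, List.length_take]
  exact min_eq_left (indexOf_lt p x h)

theorem mem_of_pref {p : List V} {x y : V} (h : y ∈ pref p x) : y ∈ p :=
  List.mem_of_mem_take h

theorem mem_of_suff {p : List V} {x y : V} (h : y ∈ suff p x) : y ∈ p :=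
  List.mem_of_mem_drop h

theorem mem_iff_pref_or_tail_suff (p : List V) (x y : V) :
    y ∈ p ↔ y ∈ pref p x ∨ y ∈ (suff p x).tail := by
  conv_lhs => rw [← pref_append_tail_suff p x]
  simp

/-- key: the indexOf-split of `pref p x ++ t` at `x` recovers `pref p x` and `x :: t`. -/
theorem indexOf_pref_append (p : List V) (x : V) (h : x ∈ p) (t : List V) :
    (pref p x ++ t).idxOf x = p.idxOf x := by
  rw [pref_eq p x h, List.append_assoc, List.singleton_append]
  rw [List.idxOf_append_of_notMem (not_mem_take_indexOf p x), List.idxOf_cons_self]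
  simp [List.length_take, min_eq_left (indexOf_lt p x h).le]

theorem pref_pref_append (p : List V) (x : V) (h : x ∈ p) (t : List V) :
    pref (pref p x ++ t) x = pref p x := by
  rw [pref, indexOf_pref_append p x h, ← length_pref p x h,
    List.take_left']
  rfl

theorem suff_pref_append (p : List V) (x : V) (h : x ∈ p) (t : List V) :
    suff (pref p x ++ t) x = x :: t := by
  have h1 : pref p x ++ t = p.take (p.idxOf x) ++ (x :: t) := by
    rw [pref_eq p x h, List.append_assoc, List.singleton_append]
  rw [suff, indexOf_pref_append p x h, h1]
  have h2 : p.idxOf x = (p.take (p.idxOf x)).length + 0 := by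
    simp [List.length_take, min_eq_left (indexOf_lt p x h).le]
  nth_rewrite 1 [h2]
  rw [List.drop_append]
  simp




theorem isPathFrom_pref {E : V → V → Prop} {a b x : V} {p : List V}
    (hp : IsPathFrom E a b p) (hx : x ∈ p) : IsPathFrom E a x (pref p x) :=
  ⟨hp.1.take _, by rw [head?_pref]; exact hp.2.1, getLast?_pref p x hx⟩

theorem getLast?_suff {p : List V} {x : V} (hx : x ∈ p) :
    (suff p x).getLast? = p.getLast? := by
  have hlt := indexOf_lt p x hx
  rw [suff, List.getLast?_eq_getElem?, List.getLast?_eq_getElem?, List.length_drop,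
    List.getElem?_drop]
  congr 1
  omega

theorem isPathFrom_suff {E : V → V → Prop} {a b x : V} {p : List V}
    (hp : IsPathFrom E a b p) (hx : x ∈ p) : IsPathFrom E x b (suff p x) :=
  ⟨hp.1.drop _, head?_suff p x hx, by rw [getLast?_suff hx]; exact hp.2.2⟩

theorem pathWeight_split (w : V → V → R) (p : List V) (x : V) (h : x ∈ p) :
    pathWeight w p = pathWeight w (pref p x) * pathWeight w (suff p x) := by
  conv_lhs => rw [← pref_append_tail_suff p x]
  exact pathWeight_join w _ _ x (getLast?_pref p x h) (head?_suff p x h)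

/-- in an acyclic graph every path has no duplicate vertices -/
theorem nodup_of_isPathFrom {E : V → V → Prop}
    (hacyclic : ∀ x : V, ∀ p : List V, IsPathFrom E x x p → p.length ≤ 1)
    {a b : V} {p : List V} (hp : IsPathFrom E a b p) : p.Nodup := by
  by_contra hnd
  rw [List.nodup_iff_injective_get] at hnd
  simp only [Function.Injective, not_forall] at hnd
  obtain ⟨i, j, hij, hne⟩ := hnd
  wlog hlt : (i : ℕ) < (j : ℕ) generalizing i j
  · have hij' : (i : ℕ) ≠ (j : ℕ) := fun h => hne (Fin.ext h)
    exact this j i hij.symm (Ne.symm hne) (by omega)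
  set q : List V := (p.drop i).take (j - i + 1) with hq
  have hjlen : (j : ℕ) < p.length := j.isLt
  have hlen : q.length = j - i + 1 := by
    simp only [hq, List.length_take, List.length_drop]
    omega
  have hhead : q.head? = some (p.get i) := by
    rw [hq, List.head?_take, if_neg (by omega), List.head?_drop]
    simp [List.getElem?_eq_getElem i.isLt, List.get_eq_getElem]
  have hlast : q.getLast? = some (p.get j) := by
    rw [List.getLast?_eq_getElem?, hlen]
    simp only [hq]
    rw [List.getElem?_take, if_pos (by omega), List.getElem?_drop]
    have : (i : ℕ) + (j - i + 1 - 1) = j := by omega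
    rw [this, List.getElem?_eq_getElem hjlen]
    simp [List.get_eq_getElem]
  have hpath : IsPathFrom E (p.get i) (p.get i) q :=
    ⟨(hp.1.drop i).take _, hhead, by rw [hlast, hij]⟩
  have := hacyclic _ _ hpath
  omega



section Sel
variable {n : ℕ}

open Classical in
noncomputable def iSet (P : Fin n → List V) : Finset (Fin n) :=
  univ.filter (fun i => ∃ j, j ≠ i ∧ ∃ y, y ∈ P i ∧ y ∈ P j)

theorem mem_iSet {P : Fin n → List V} {i : Fin n} :
    i ∈ iSet P ↔ ∃ j, j ≠ i ∧ ∃ y, y ∈ P i ∧ y ∈ P j := by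
  simp [iSet]

theorem iSet_nonempty {P : Fin n → List V} (h : ¬ NonIntersecting P) :
    (iSet P).Nonempty := by
  rw [NonIntersecting] at h; push_neg at h
  obtain ⟨i, j, hne, x, hxi, hxj⟩ := h
  exact ⟨i, mem_iSet.2 ⟨j, Ne.symm hne, x, hxi, hxj⟩⟩

noncomputable def selI (P : Fin n → List V) (h : ¬ NonIntersecting P) : Fin n :=
  (iSet P).min' (iSet_nonempty h)

theorem selI_mem (P : Fin n → List V) (h : ¬ NonIntersecting P) : selI P h ∈ iSet P :=
  Finset.min'_mem _ _

theorem selI_min (P : Fin n → List V) (h : ¬ NonIntersecting P) {m : Fin n}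
    (hm : m ∈ iSet P) : selI P h ≤ m :=
  Finset.min'_le _ _ hm

open Classical in
noncomputable def kSet (P : Fin n → List V) (i : Fin n) : Finset ℕ :=
  (Finset.range (P i).length).filter
    (fun k => ∃ j, j ≠ i ∧ ∃ y, (P i)[k]? = some y ∧ y ∈ P j)

theorem mem_kSet {P : Fin n → List V} {i : Fin n} {k : ℕ} :
    k ∈ kSet P i ↔ k < (P i).length ∧ ∃ j, j ≠ i ∧ ∃ y, (P i)[k]? = some y ∧ y ∈ P j := by
  simp [kSet]

omit [DecidableEq V] in
theorem lt_length_of_getElem?_some {l : List V} {k : ℕ} {y : V} (h : l[k]? = some y) :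
    k < l.length := by
  by_contra hk
  rw [List.getElem?_eq_none (by omega)] at h
  cases h

theorem kSet_nonempty {P : Fin n → List V} {i : Fin n} (hi : i ∈ iSet P) :
    (kSet P i).Nonempty := by
  obtain ⟨j, hj, y, hyi, hyj⟩ := mem_iSet.1 hi
  obtain ⟨k, hk⟩ := List.mem_iff_getElem?.1 hyi
  exact ⟨k, mem_kSet.2 ⟨lt_length_of_getElem?_some hk, j, hj, y, hk, hyj⟩⟩

noncomputable def selK (P : Fin n → List V) (h : ¬ NonIntersecting P) : ℕ :=
  (kSet P (selI P h)).min' (kSet_nonempty (selI_mem P h))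

theorem selK_mem (P : Fin n → List V) (h : ¬ NonIntersecting P) :
    selK P h ∈ kSet P (selI P h) := Finset.min'_mem _ _

theorem selK_lt (P : Fin n → List V) (h : ¬ NonIntersecting P) :
    selK P h < (P (selI P h)).length := (mem_kSet.1 (selK_mem P h)).1

theorem selK_min (P : Fin n → List V) (h : ¬ NonIntersecting P) {m : ℕ}
    (hm : m ∈ kSet P (selI P h)) : selK P h ≤ m :=
  Finset.min'_le _ _ hm

noncomputable def selX (P : Fin n → List V) (h : ¬ NonIntersecting P) : V :=
  (P (selI P h))[selK P h]'(selK_lt P h)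

theorem getElem?_selX (P : Fin n → List V) (h : ¬ NonIntersecting P) :
    (P (selI P h))[selK P h]? = some (selX P h) :=
  List.getElem?_eq_getElem (selK_lt P h)

theorem selX_mem (P : Fin n → List V) (h : ¬ NonIntersecting P) :
    selX P h ∈ P (selI P h) := List.getElem_mem _

open Classical in
noncomputable def jSet (P : Fin n → List V) (i : Fin n) (x : V) : Finset (Fin n) :=
  univ.filter (fun j => j ≠ i ∧ x ∈ P j)

theorem mem_jSet {P : Fin n → List V} {i j : Fin n} {x : V} :
    j ∈ jSet P i x ↔ j ≠ i ∧ x ∈ P j := by simp [jSet]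

theorem jSet_nonempty (P : Fin n → List V) (h : ¬ NonIntersecting P) :
    (jSet P (selI P h) (selX P h)).Nonempty := by
  obtain ⟨-, j, hj, y, hy, hyj⟩ := mem_kSet.1 (selK_mem P h)
  have : y = selX P h := by
    have := getElem?_selX P h
    rw [hy] at this; exact Option.some_injective _ this
  exact ⟨j, mem_jSet.2 ⟨hj, this ▸ hyj⟩⟩

noncomputable def selJ (P : Fin n → List V) (h : ¬ NonIntersecting P) : Fin n :=
  (jSet P (selI P h) (selX P h)).min' (jSet_nonempty P h)

theorem selJ_mem (P : Fin n → List V) (h : ¬ NonIntersecting P) :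
    selJ P h ∈ jSet P (selI P h) (selX P h) := Finset.min'_mem _ _

theorem selJ_ne (P : Fin n → List V) (h : ¬ NonIntersecting P) :
    selJ P h ≠ selI P h := (mem_jSet.1 (selJ_mem P h)).1

theorem selX_mem_selJ (P : Fin n → List V) (h : ¬ NonIntersecting P) :
    selX P h ∈ P (selJ P h) := (mem_jSet.1 (selJ_mem P h)).2

theorem selJ_min (P : Fin n → List V) (h : ¬ NonIntersecting P) {m : Fin n}
    (hm : m ∈ jSet P (selI P h) (selX P h)) : selJ P h ≤ m :=
  Finset.min'_le _ _ hm

theorem selI_lt_selJ (P : Fin n → List V) (h : ¬ NonIntersecting P) :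
    selI P h < selJ P h := by
  have hmem : selJ P h ∈ iSet P :=
    mem_iSet.2 ⟨selI P h, Ne.symm (selJ_ne P h), selX P h, selX_mem_selJ P h, selX_mem P h⟩
  exact lt_of_le_of_ne (selI_min P h hmem) (Ne.symm (selJ_ne P h))

theorem selK_min' (P : Fin n → List V) (h : ¬ NonIntersecting P) {m : ℕ}
    (hm : m < selK P h) {y : V} (hy : (P (selI P h))[m]? = some y)
    {j : Fin n} (hj : j ≠ selI P h) : y ∉ P j := by
  intro hyj
  have : m ∈ kSet P (selI P h) :=
    mem_kSet.2 ⟨lt_length_of_getElem?_some hy, j, hj, y, hy, hyj⟩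
  exact absurd (selK_min P h this) (by omega)

theorem indexOf_le_getElem {l : List V} {k : ℕ} (hk : k < l.length) :
    l.idxOf l[k] ≤ k := by
  induction l generalizing k with
  | nil => simp at hk
  | cons a t ih =>
    cases k with
    | zero => simp [List.idxOf_cons_self]
    | succ k =>
      by_cases hxa : (a :: t)[k+1] = a
      · rw [hxa, List.idxOf_cons_self]; omega
      · rw [List.getElem_cons_succ] at hxa ⊢
        rw [List.idxOf_cons_ne _ (by simpa using Ne.symm hxa)]
        have := ih (k := k) (by simpa using hk)
        omega

theorem indexOf_selX (P : Fin n → List V) (h : ¬ NonIntersecting P) :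
    (P (selI P h)).idxOf (selX P h) = selK P h := by
  refine le_antisymm (indexOf_le_getElem (selK_lt P h)) ?_
  by_contra hlt
  push_neg at hlt
  have hmem : selX P h ∈ P (selI P h) := selX_mem P h
  have hidx := indexOf_lt _ _ hmem
  have hy : (P (selI P h))[(P (selI P h)).idxOf (selX P h)]? = some (selX P h) := by
    rw [List.getElem?_eq_getElem hidx, List.getElem_idxOf]
  exact selK_min' P h hlt hy (selJ_ne P h) (selX_mem_selJ P h)

end Sel

section Swap
variable {n : ℕ}

noncomputable def swapAt (P : Fin n → List V) (i j : Fin n) (x : V) : Fin n → List V :=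
  Function.update (Function.update P i (pref (P i) x ++ (suff (P j) x).tail)) j
    (pref (P j) x ++ (suff (P i) x).tail)

theorem swapAt_apply_i {P : Fin n → List V} {i j : Fin n} {x : V} (hij : i ≠ j) :
    swapAt P i j x i = pref (P i) x ++ (suff (P j) x).tail := by
  simp [swapAt, Function.update_of_ne hij]

theorem swapAt_apply_j {P : Fin n → List V} {i j : Fin n} {x : V} :
    swapAt P i j x j = pref (P j) x ++ (suff (P i) x).tail := by
  simp [swapAt]

theorem swapAt_apply_other {P : Fin n → List V} {i j m : Fin n} {x : V}
    (hmi : m ≠ i) (hmj : m ≠ j) : swapAt P i j x m = P m := by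
  simp [swapAt, Function.update_of_ne hmj, Function.update_of_ne hmi]

theorem mem_swap_pair_iff {P : Fin n → List V} {i j : Fin n} {x : V} (hij : i ≠ j)
    (y : V) :
    (y ∈ swapAt P i j x i ∨ y ∈ swapAt P i j x j) ↔ (y ∈ P i ∨ y ∈ P j) := by
  rw [swapAt_apply_i hij, swapAt_apply_j, List.mem_append, List.mem_append,
    mem_iff_pref_or_tail_suff (P i) x y, mem_iff_pref_or_tail_suff (P j) x y]
  tauto

theorem x_mem_swapAt_i {P : Fin n → List V} {i j : Fin n} {x : V} (hij : i ≠ j)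
    (hxi : x ∈ P i) : x ∈ swapAt P i j x i := by
  rw [swapAt_apply_i hij, List.mem_append]
  exact Or.inl (mem_pref_self _ _ hxi)

theorem x_mem_swapAt_j {P : Fin n → List V} {i j : Fin n} {x : V}
    (hxj : x ∈ P j) : x ∈ swapAt P i j x j := by
  rw [swapAt_apply_j, List.mem_append]
  exact Or.inl (mem_pref_self _ _ hxj)

theorem not_nonIntersecting_swapAt {P : Fin n → List V} {i j : Fin n} {x : V}
    (hij : i ≠ j) (hxi : x ∈ P i) (hxj : x ∈ P j) :
    ¬ NonIntersecting (swapAt P i j x) := by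
  intro hNI
  exact hNI i j hij x (x_mem_swapAt_i hij hxi) (x_mem_swapAt_j hxj)

end Swap

section SwapSpec
variable {n : ℕ}

omit [DecidableEq V] in
theorem nodup_getElem_not_mem_drop {l : List V} (hnd : l.Nodup) {m nn : ℕ}
    (hmn : m < nn) (hm : m < l.length) : l[m] ∉ l.drop nn := by
  intro hy
  obtain ⟨r, hr⟩ := List.mem_iff_getElem?.1 hy
  rw [List.getElem?_drop] at hr
  have h2 : nn + r < l.length := lt_length_of_getElem?_some hr
  rw [List.getElem?_eq_getElem h2] at hr
  have := (hnd.getElem_inj_iff).1 (Option.some_injective _ hr)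
  omega

theorem getElem?_swapAt_i_le (P : Fin n → List V) (h : ¬ NonIntersecting P) {m : ℕ}
    (hm : m ≤ selK P h) :
    (swapAt P (selI P h) (selJ P h) (selX P h) (selI P h))[m]? = (P (selI P h))[m]? := by
  rw [swapAt_apply_i (Ne.symm (selJ_ne P h)), List.getElem?_append,
    if_pos (by rw [length_pref _ _ (selX_mem P h), indexOf_selX]; omega),
    pref, List.getElem?_take, if_pos (by rw [indexOf_selX]; omega)]

theorem getElem?_swapAt_i_selK (P : Fin n → List V) (h : ¬ NonIntersecting P) :
    (swapAt P (selI P h) (selJ P h) (selX P h) (selI P h))[selK P h]? = some (selX P h) := by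
  rw [getElem?_swapAt_i_le P h le_rfl]
  exact getElem?_selX P h

theorem selI_swap (P : Fin n → List V) (h : ¬ NonIntersecting P)
    (h' : ¬ NonIntersecting (swapAt P (selI P h) (selJ P h) (selX P h))) :
    selI (swapAt P (selI P h) (selJ P h) (selX P h)) h' = selI P h := by
  set Q := swapAt P (selI P h) (selJ P h) (selX P h) with hQ
  have hji : selJ P h ≠ selI P h := selJ_ne P h
  have hij : selI P h ≠ selJ P h := Ne.symm hji
  have hilt : selI P h < selJ P h := selI_lt_selJ P h
  have hxi : selX P h ∈ P (selI P h) := selX_mem P h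
  have hxj : selX P h ∈ P (selJ P h) := selX_mem_selJ P h
  refine le_antisymm
    (Finset.min'_le _ _ (mem_iSet.2
      ⟨selJ P h, hji, selX P h, x_mem_swapAt_i hij hxi, x_mem_swapAt_j hxj⟩))
    (Finset.le_min' _ _ _ ?_)
  intro m hm
  by_contra hlt
  push_neg at hlt
  have hmi : m ≠ selI P h := ne_of_lt hlt
  have hmj : m ≠ selJ P h := ne_of_lt (lt_trans hlt hilt)
  obtain ⟨jj, hjjm, y, hym, hyjj⟩ := mem_iSet.1 hm
  rw [swapAt_apply_other hmi hmj] at hym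
  have hex : ∃ j', j' ≠ m ∧ y ∈ P j' := by
    by_cases hjj : jj = selI P h ∨ jj = selJ P h
    · have hmemQ : y ∈ Q (selI P h) ∨ y ∈ Q (selJ P h) := by
        rcases hjj with rfl | rfl
        exacts [Or.inl hyjj, Or.inr hyjj]
      rcases (mem_swap_pair_iff hij y).1 hmemQ with hh | hh
      exacts [⟨selI P h, Ne.symm hmi, hh⟩, ⟨selJ P h, Ne.symm hmj, hh⟩]
    · push_neg at hjj
      exact ⟨jj, hjjm, by rwa [swapAt_apply_other hjj.1 hjj.2] at hyjj⟩
  obtain ⟨j', hj'm, hyj'⟩ := hex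
  exact absurd (selI_min P h (mem_iSet.2 ⟨j', hj'm, y, hym, hyj'⟩)) (not_le.2 hlt)

theorem selK_swap (P : Fin n → List V) (h : ¬ NonIntersecting P)
    (hnd : ∀ m, (P m).Nodup)
    (h' : ¬ NonIntersecting (swapAt P (selI P h) (selJ P h) (selX P h))) :
    selK (swapAt P (selI P h) (selJ P h) (selX P h)) h' = selK P h := by
  set Q := swapAt P (selI P h) (selJ P h) (selX P h) with hQ
  have hIs := selI_swap P h h'
  have hji : selJ P h ≠ selI P h := selJ_ne P h
  have hij : selI P h ≠ selJ P h := Ne.symm hji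
  have hkQ : selK P h ∈ kSet Q (selI Q h') := by
    rw [hIs]
    exact mem_kSet.2 ⟨lt_length_of_getElem?_some (getElem?_swapAt_i_selK P h),
      selJ P h, hji, selX P h, getElem?_swapAt_i_selK P h,
      x_mem_swapAt_j (selX_mem_selJ P h)⟩
  refine le_antisymm (Finset.min'_le _ _ hkQ) (Finset.le_min' _ _ _ ?_)
  intro m hm
  by_contra hlt
  push_neg at hlt
  rw [hIs] at hm
  obtain ⟨hmlen, jj, hjji, y, hy, hyjj⟩ := mem_kSet.1 hm
  rw [getElem?_swapAt_i_le P h (le_of_lt hlt)] at hy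
  rcases eq_or_ne jj (selJ P h) with rfl | hjjj
  · rw [swapAt_apply_j, List.mem_append] at hyjj
    rcases hyjj with hh | hh
    · exact selK_min' P h hlt hy hjji (mem_of_pref hh)
    · rw [suff, indexOf_selX, List.tail_drop] at hh
      have hyg : y = (P (selI P h))[m]'(lt_length_of_getElem?_some hy) := by
        have := List.getElem?_eq_getElem (lt_length_of_getElem?_some hy)
        rw [hy] at this
        exact Option.some_injective _ this
      rw [hyg] at hh
      exact nodup_getElem_not_mem_drop (hnd (selI P h)) (by omega)
        (lt_length_of_getElem?_some hy) hh
  · rw [swapAt_apply_other hjji hjjj] at hyjj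
    exact selK_min' P h hlt hy hjji hyjj

theorem selX_swap (P : Fin n → List V) (h : ¬ NonIntersecting P)
    (hnd : ∀ m, (P m).Nodup)
    (h' : ¬ NonIntersecting (swapAt P (selI P h) (selJ P h) (selX P h))) :
    selX (swapAt P (selI P h) (selJ P h) (selX P h)) h' = selX P h := by
  have h1 := getElem?_selX (swapAt P (selI P h) (selJ P h) (selX P h)) h'
  rw [selI_swap P h h', selK_swap P h hnd h', getElem?_swapAt_i_selK P h] at h1
  exact (Option.some_injective _ h1).symm

theorem selJ_swap (P : Fin n → List V) (h : ¬ NonIntersecting P)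
    (hnd : ∀ m, (P m).Nodup)
    (h' : ¬ NonIntersecting (swapAt P (selI P h) (selJ P h) (selX P h))) :
    selJ (swapAt P (selI P h) (selJ P h) (selX P h)) h' = selJ P h := by
  set Q := swapAt P (selI P h) (selJ P h) (selX P h) with hQ
  have hIs := selI_swap P h h'
  have hXs := selX_swap P h hnd h'
  have hji : selJ P h ≠ selI P h := selJ_ne P h
  have hjQ : selJ P h ∈ jSet Q (selI Q h') (selX Q h') := by
    rw [hIs, hXs]
    exact mem_jSet.2 ⟨hji, x_mem_swapAt_j (selX_mem_selJ P h)⟩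
  refine le_antisymm (Finset.min'_le _ _ hjQ) (Finset.le_min' _ _ _ ?_)
  intro m hm
  rw [hIs, hXs] at hm
  obtain ⟨hmi, hxm⟩ := mem_jSet.1 hm
  rcases eq_or_ne m (selJ P h) with rfl | hmj
  · exact le_refl _
  · rw [swapAt_apply_other hmi hmj] at hxm
    exact selJ_min P h (mem_jSet.2 ⟨hmi, hxm⟩)

theorem swapAt_swapAt {P : Fin n → List V} {i j : Fin n} {x : V} (hij : i ≠ j)
    (hxi : x ∈ P i) (hxj : x ∈ P j) :
    swapAt (swapAt P i j x) i j x = P := by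
  funext m
  rcases eq_or_ne m i with rfl | hmi
  · rw [swapAt_apply_i hij]
    rw [show swapAt P m j x m = pref (P m) x ++ (suff (P j) x).tail from swapAt_apply_i hij,
      show swapAt P m j x j = pref (P j) x ++ (suff (P m) x).tail from swapAt_apply_j,
      pref_pref_append _ _ hxi, suff_pref_append _ _ hxj, List.tail_cons]
    exact pref_append_tail_suff (P m) x
  rcases eq_or_ne m j with rfl | hmj
  · rw [swapAt_apply_j]
    rw [show swapAt P i m x m = pref (P m) x ++ (suff (P i) x).tail from swapAt_apply_j,
      show swapAt P i m x i = pref (P i) x ++ (suff (P m) x).tail from swapAt_apply_i hij,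
      pref_pref_append _ _ hxj, suff_pref_append _ _ hxi, List.tail_cons]
    exact pref_append_tail_suff (P m) x
  · rw [swapAt_apply_other hmi hmj, swapAt_apply_other hmi hmj]

theorem swapAt_paths {E : V → V → Prop} {a c : Fin n → V} {P : Fin n → List V}
    {i j : Fin n} {x : V} (hij : i ≠ j) (hxi : x ∈ P i) (hxj : x ∈ P j)
    (hP : ∀ m, IsPathFrom E (a m) (c m) (P m)) :
    ∀ m, IsPathFrom E (a m) (c (Equiv.swap i j m)) (swapAt P i j x m) := by
  intro m
  rcases eq_or_ne m i with rfl | hmi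
  · rw [swapAt_apply_i hij, Equiv.swap_apply_left]
    exact isPathFrom_join (isPathFrom_pref (hP m) hxi) (isPathFrom_suff (hP j) hxj)
  rcases eq_or_ne m j with rfl | hmj
  · rw [swapAt_apply_j, Equiv.swap_apply_right]
    exact isPathFrom_join (isPathFrom_pref (hP m) hxj) (isPathFrom_suff (hP i) hxi)
  · rw [swapAt_apply_other hmi hmj, Equiv.swap_apply_of_ne_of_ne hmi hmj]
    exact hP m

theorem prod_swapAt {R : Type*} [CommRing R] (w : V → V → R) {P : Fin n → List V}
    {i j : Fin n} {x : V} (hij : i ≠ j) (hxi : x ∈ P i) (hxj : x ∈ P j) :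
    ∏ m, pathWeight w (swapAt P i j x m) = ∏ m, pathWeight w (P m) := by
  have hjmem : j ∈ univ.erase i := Finset.mem_erase.2 ⟨Ne.symm hij, mem_univ j⟩
  rw [← Finset.mul_prod_erase univ (fun m => pathWeight w (swapAt P i j x m)) (mem_univ i),
    ← Finset.mul_prod_erase (univ.erase i) _ hjmem,
    ← Finset.mul_prod_erase univ (fun m => pathWeight w (P m)) (mem_univ i),
    ← Finset.mul_prod_erase (univ.erase i) _ hjmem]
  have hrest : ∏ m ∈ (univ.erase i).erase j, pathWeight w (swapAt P i j x m) =
      ∏ m ∈ (univ.erase i).erase j, pathWeight w (P m) := by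
    refine Finset.prod_congr rfl (fun m hm => ?_)
    rw [Finset.mem_erase, Finset.mem_erase] at hm
    rw [swapAt_apply_other hm.2.1 hm.1]
  rw [hrest, swapAt_apply_i hij, swapAt_apply_j,
    pathWeight_join w _ _ x (getLast?_pref _ _ hxi) (head?_suff _ _ hxj),
    pathWeight_join w _ _ x (getLast?_pref _ _ hxj) (head?_suff _ _ hxi),
    pathWeight_split w (P i) x hxi, pathWeight_split w (P j) x hxj]
  ring

end SwapSpec
end LGVAux


/-- LGV corollary for `D`-compatible endpoints:
if every path `u_i → v_l` intersects every path `u_j → v_k` for `i < j`, `k < l`,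
then `F₀(u, v) = det[h(u_i, v_j)]`. -/
theorem lindstrom_gessel_viennot_compatible {V R : Type*} [CommRing R]
    (E : V → V → Prop) (w : V → V → R)
    (hacyclic : ∀ x : V, ∀ p : List V, IsPathFrom E x x p → p.length ≤ 1)
    (hfin : ∀ a b : V, {p : List V | IsPathFrom E a b p}.Finite)
    (n : ℕ) (u v : Fin n → V)
    (hcompat : ∀ i j k l : Fin n, i < j → k < l →
      ∀ p q : List V, IsPathFrom E (u i) (v l) p → IsPathFrom E (u j) (v k) q →
        ∃ x, x ∈ p ∧ x ∈ q) :
    nonIntGF E w n u v =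
      Matrix.det (Matrix.of fun i j : Fin n => pathGF E w (u i) (v j)) := by
  classical
  open LGVAux in
  -- finite sets of paths and of path systems
  set Paths : V → V → Finset (List V) := fun a b => (hfin a b).toFinset with hPathsDef
  have hPathsMem : ∀ a b (p : List V), p ∈ Paths a b ↔ IsPathFrom E a b p :=
    fun a b p => (hfin a b).mem_toFinset
  have hGF : ∀ a b, pathGF E w a b = ∑ p ∈ Paths a b, pathWeight w p := by
    intro a b
    rw [pathGF, ← (hfin a b).coe_toFinset, finsum_mem_coe_finset]
  set allP : Equiv.Perm (Fin n) → Finset (Fin n → List V) :=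
    fun σ => Fintype.piFinset (fun i => Paths (u i) (v (σ i))) with hallPDef
  have hmem_allP : ∀ σ (P : Fin n → List V),
      P ∈ allP σ ↔ ∀ i, IsPathFrom E (u i) (v (σ i)) (P i) := by
    intro σ P
    simp only [hallPDef, Fintype.mem_piFinset, hPathsMem]
  -- determinant expansion
  have hdet : Matrix.det (Matrix.of fun i j : Fin n => pathGF E w (u i) (v j)) =
      ∑ σ : Equiv.Perm (Fin n),
        ((Equiv.Perm.sign σ : ℤ) : R) * ∑ P ∈ allP σ, ∏ i, pathWeight w (P i) := by
    rw [← Matrix.det_transpose, Matrix.det_apply']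
    refine Finset.sum_congr rfl (fun σ _ => ?_)
    congr 1
    have : ∀ i, (Matrix.of fun i j : Fin n => pathGF E w (u i) (v j)).transpose (σ i) i
        = pathGF E w (u i) (v (σ i)) := fun i => rfl
    rw [Finset.prod_congr rfl (fun i _ => (this i).trans (hGF (u i) (v (σ i)))),
      Finset.prod_univ_sum]
  -- split into intersecting and non-intersecting parts
  have hsplit : ∀ σ, (∑ P ∈ allP σ, ∏ i, pathWeight w (P i)) =
      (∑ P ∈ (allP σ).filter (fun P => NonIntersecting P), ∏ i, pathWeight w (P i)) +
      (∑ P ∈ (allP σ).filter (fun P => ¬ NonIntersecting P), ∏ i, pathWeight w (P i)) :=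
    fun σ => (Finset.sum_filter_add_sum_filter_not _ _ _).symm
  -- the intersecting part cancels by the involution
  set s' := (univ : Finset (Equiv.Perm (Fin n))).sigma
    (fun σ => (allP σ).filter (fun P => ¬ NonIntersecting P)) with hs'Def
  have hbad : ∀ x : (Σ _ : Equiv.Perm (Fin n), Fin n → List V), x ∈ s' → ¬ NonIntersecting x.2 :=
    fun x hx => (Finset.mem_filter.1 (Finset.mem_sigma.1 hx).2).2
  have hpaths : ∀ x : (Σ _ : Equiv.Perm (Fin n), Fin n → List V), x ∈ s' →
      ∀ m, IsPathFrom E (u m) (v (x.1 m)) (x.2 m) :=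
    fun x hx => (hmem_allP x.1 x.2).1 (Finset.mem_filter.1 (Finset.mem_sigma.1 hx).2).1
  have hnd : ∀ x : (Σ _ : Equiv.Perm (Fin n), Fin n → List V), x ∈ s' →
      ∀ m, (x.2 m).Nodup :=
    fun x hx m => nodup_of_isPathFrom hacyclic (hpaths x hx m)
  have key : ∑ x ∈ s', ((Equiv.Perm.sign x.1 : ℤ) : R) * ∏ i, pathWeight w (x.2 i) = 0 := by
    refine Finset.sum_involution
      (fun x hx => ⟨x.1 * Equiv.swap (selI x.2 (hbad x hx)) (selJ x.2 (hbad x hx)),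
        swapAt x.2 (selI x.2 (hbad x hx)) (selJ x.2 (hbad x hx)) (selX x.2 (hbad x hx))⟩)
      ?_ ?_ ?_ ?_
    · -- sums to zero
      intro x hx
      have hb := hbad x hx
      have hij : selI x.2 hb ≠ selJ x.2 hb := Ne.symm (selJ_ne x.2 hb)
      have hsign : Equiv.Perm.sign (x.1 * Equiv.swap (selI x.2 hb) (selJ x.2 hb)) =
          - Equiv.Perm.sign x.1 := by
        rw [Equiv.Perm.sign_mul, Equiv.Perm.sign_swap hij, mul_neg_one]
      dsimp only
      rw [prod_swapAt w hij (selX_mem x.2 hb) (selX_mem_selJ x.2 hb), hsign]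
      push_cast
      ring
    · -- no fixed points
      intro x hx _ heq
      have hb := hbad x hx
      have h1 := congrArg Sigma.fst heq
      dsimp only at h1
      have h2 : Equiv.swap (selI x.2 hb) (selJ x.2 hb) = 1 := by
        have := mul_left_cancel (a := x.1)
          (b := Equiv.swap (selI x.2 hb) (selJ x.2 hb)) (c := 1) (by rw [mul_one]; exact h1)
        exact this
      have h3 : selJ x.2 hb = selI x.2 hb := by
        have := congrArg (fun e : Equiv.Perm (Fin n) => e (selI x.2 hb)) h2
        simpa [Equiv.swap_apply_left] using this
      exact selJ_ne x.2 hb h3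
    · -- maps into the set
      intro x hx
      have hb := hbad x hx
      have hij : selI x.2 hb ≠ selJ x.2 hb := Ne.symm (selJ_ne x.2 hb)
      rw [Finset.mem_sigma]
      refine ⟨mem_univ _, Finset.mem_filter.2 ⟨?_, ?_⟩⟩
      · rw [hmem_allP]
        intro m
        have := swapAt_paths hij (selX_mem x.2 hb) (selX_mem_selJ x.2 hb) (hpaths x hx) m
        simpa [Equiv.Perm.mul_apply] using this
      · exact not_nonIntersecting_swapAt hij (selX_mem x.2 hb) (selX_mem_selJ x.2 hb)
    · -- involution
      intro x hx
      have hb := hbad x hx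
      have hij : selI x.2 hb ≠ selJ x.2 hb := Ne.symm (selJ_ne x.2 hb)
      have hb' : ¬ NonIntersecting
          (swapAt x.2 (selI x.2 hb) (selJ x.2 hb) (selX x.2 hb)) :=
        not_nonIntersecting_swapAt hij (selX_mem x.2 hb) (selX_mem_selJ x.2 hb)
      dsimp only
      rw [selJ_swap x.2 hb (hnd x hx) hb', selX_swap x.2 hb (hnd x hx) hb',
        selI_swap x.2 hb hb',
        swapAt_swapAt hij (selX_mem x.2 hb) (selX_mem_selJ x.2 hb),
        mul_assoc, Equiv.swap_mul_self, mul_one]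
  have hbadzero : ∑ σ : Equiv.Perm (Fin n), ((Equiv.Perm.sign σ : ℤ) : R) *
      ∑ P ∈ (allP σ).filter (fun P => ¬ NonIntersecting P), ∏ i, pathWeight w (P i) = 0 := by
    calc ∑ σ : Equiv.Perm (Fin n), ((Equiv.Perm.sign σ : ℤ) : R) *
        ∑ P ∈ (allP σ).filter (fun P => ¬ NonIntersecting P), ∏ i, pathWeight w (P i)
        = ∑ σ : Equiv.Perm (Fin n), ∑ P ∈ (allP σ).filter (fun P => ¬ NonIntersecting P),
            ((Equiv.Perm.sign σ : ℤ) : R) * ∏ i, pathWeight w (P i) := by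
          exact Finset.sum_congr rfl (fun σ _ => Finset.mul_sum _ _ _)
      _ = ∑ x ∈ s', ((Equiv.Perm.sign x.1 : ℤ) : R) * ∏ i, pathWeight w (x.2 i) :=
          Finset.sum_sigma' _ _ _
      _ = 0 := key
  -- non-intersecting systems force σ = 1
  have hone : ∀ σ : Equiv.Perm (Fin n), σ ≠ 1 →
      (allP σ).filter (fun P => NonIntersecting P) = ∅ := by
    intro σ hσ
    rw [Finset.filter_eq_empty_iff]
    intro P hP hNI
    have hPm := (hmem_allP σ P).1 hP
    apply hσ
    have hmono : StrictMono σ := by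
      intro i j hij
      by_contra hle
      push_neg at hle
      have hne : σ j ≠ σ i := fun hh => (ne_of_lt hij) (σ.injective hh.symm)
      have hlt : σ j < σ i := lt_of_le_of_ne hle hne
      obtain ⟨x, hxi, hxj⟩ := hcompat i j (σ j) (σ i) hij hlt (P i) (P j) (hPm i) (hPm j)
      exact hNI i j (ne_of_lt hij) x hxi hxj
    have hid : (σ : Fin n → Fin n) = id :=
      (StrictMono.range_inj hmono strictMono_id).1
        (by rw [Set.range_id, Set.range_eq_univ.2 σ.surjective])
    exact Equiv.ext (fun i => congrFun hid i)
  -- the good part equals the non-intersecting generating function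
  have hgood : ∑ σ : Equiv.Perm (Fin n), ((Equiv.Perm.sign σ : ℤ) : R) *
      ∑ P ∈ (allP σ).filter (fun P => NonIntersecting P), ∏ i, pathWeight w (P i) =
      ∑ P ∈ (allP 1).filter (fun P => NonIntersecting P), ∏ i, pathWeight w (P i) := by
    rw [Finset.sum_eq_single (1 : Equiv.Perm (Fin n))]
    · simp
    · intro σ _ hσ
      rw [hone σ hσ]
      simp
    · intro h; exact absurd (mem_univ _) h
  have hNIGF : nonIntGF E w n u v =
      ∑ P ∈ (allP 1).filter (fun P => NonIntersecting P), ∏ i, pathWeight w (P i) := by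
    have hiff : ∀ P : Fin n → List V,
        P ∈ (allP 1).filter (fun P => NonIntersecting P) ↔
        ((∀ i, IsPathFrom E (u i) (v i) (P i)) ∧ NonIntersecting P) := by
      intro P
      rw [Finset.mem_filter, hmem_allP]
      simp [Equiv.Perm.one_apply]
    have hfinS : {P : Fin n → List V |
        (∀ i, IsPathFrom E (u i) (v i) (P i)) ∧ NonIntersecting P}.Finite := by
      apply Set.Finite.subset ((allP 1).filter (fun P => NonIntersecting P)).finite_toSet
      intro P hP
      rw [Finset.mem_coe, hiff]
      exact hP
    letI : Fintype {P : Fin n → List V //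
        (∀ i, IsPathFrom E (u i) (v i) (P i)) ∧ NonIntersecting P} := hfinS.fintype
    rw [nonIntGF, finsum_eq_sum_of_fintype,
      Finset.sum_subtype ((allP 1).filter (fun P => NonIntersecting P)) hiff
        (fun P => ∏ i, pathWeight w (P i))]
  rw [hdet, Finset.sum_congr rfl (fun σ _ => by rw [hsplit σ, mul_add]),
    Finset.sum_add_distrib, hbadzero, add_zero, hgood, hNIGF]
end

section
/- The q-binomial theorem: for |q| < 1 and |x| < 1 (or as formal power series in x), Σ_{k=0}^{∞} ((a;q)_k / (q;q)_k) x^k = (ax;q)_∞ / (x;q)_∞, where (a;q)_k = ∏_{i=0}^{k−1}(1 − a q^i) and (a;q)_∞ = ∏_{i=0}^{∞}(1 − a q^i). -/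
open Finset

/-- The finite q-Pochhammer symbol `(a;q)_k = ∏_{i=0}^{k-1} (1 - a q^i)`. -/
def qPoch (a q : ℂ) (k : ℕ) : ℂ := ∏ i ∈ Finset.range k, (1 - a * q ^ i)

/-- The infinite q-Pochhammer symbol `(a;q)_∞ = ∏_{i≥0} (1 - a q^i)`. -/
noncomputable def qPochInf (a q : ℂ) : ℂ := ∏' i : ℕ, (1 - a * q ^ i)

open Filter Topology

/-- helper: `1 - z ≠ 0` when `‖z‖ < 1`. -/
lemma qb_one_sub_ne_zero {z : ℂ} (hz : ‖z‖ < 1) : 1 - z ≠ 0 := by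
  intro h
  have : (1 : ℂ) = z := by linear_combination h
  rw [← this] at hz
  simp at hz

lemma qb_qPoch_q_ne_zero {q : ℂ} (hq : ‖q‖ < 1) (k : ℕ) : qPoch q q k ≠ 0 := by
  rw [qPoch]
  apply Finset.prod_ne_zero_iff.2
  intro i _
  apply qb_one_sub_ne_zero
  rw [norm_mul, norm_pow]
  calc ‖q‖ * ‖q‖ ^ i ≤ ‖q‖ * 1 :=
        mul_le_mul_of_nonneg_left (pow_le_one₀ (norm_nonneg q) hq.le) (norm_nonneg q)
    _ = ‖q‖ := by ring
    _ < 1 := hq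

lemma qb_exp_neg_le_one_sub {r t : ℝ} (hr : r < 1) (ht : 0 ≤ t) (htr : t ≤ r) :
    Real.exp (-(t / (1 - r))) ≤ 1 - t := by
  have h1 : 0 < 1 - r := by linarith
  have h2 : 0 < 1 - t := by linarith
  have hs : t / (1 - t) ≤ t / (1 - r) := by
    apply div_le_div_of_nonneg_left ht h1; linarith
  have h3 : t / (1 - t) + 1 ≤ Real.exp (t / (1 - t)) := Real.add_one_le_exp _
  have h4 : (1 : ℝ) / (1 - t) ≤ Real.exp (t / (1 - r)) := by
    have : (1 : ℝ) / (1 - t) = t / (1 - t) + 1 := by field_simp; ring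
    rw [this]
    exact h3.trans (Real.exp_le_exp.2 hs)
  rw [Real.exp_neg, inv_le_comm₀ (Real.exp_pos _) h2, ← one_div]
  exact h4

lemma qb_qPoch_norm_le (a : ℂ) {q : ℂ} (hq : ‖q‖ < 1) (k : ℕ) :
    ‖qPoch a q k‖ ≤ Real.exp (‖a‖ / (1 - ‖q‖)) := by
  have h1 : (0:ℝ) < 1 - ‖q‖ := by linarith
  rw [qPoch, norm_prod]
  calc ∏ i ∈ range k, ‖1 - a * q ^ i‖
      ≤ ∏ i ∈ range k, Real.exp (‖a‖ * ‖q‖ ^ i) := by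
        apply Finset.prod_le_prod (fun i _ => norm_nonneg _)
        intro i _
        calc ‖1 - a * q ^ i‖ ≤ ‖(1:ℂ)‖ + ‖a * q ^ i‖ := norm_sub_le _ _
          _ = ‖a‖ * ‖q‖ ^ i + 1 := by rw [norm_one, norm_mul, norm_pow]; ring
          _ ≤ Real.exp (‖a‖ * ‖q‖ ^ i) := Real.add_one_le_exp _
    _ = Real.exp (∑ i ∈ range k, ‖a‖ * ‖q‖ ^ i) := (Real.exp_sum _ _).symm
    _ ≤ Real.exp (‖a‖ / (1 - ‖q‖)) := by
        apply Real.exp_le_exp.2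
        rw [← Finset.mul_sum, div_eq_mul_inv]
        apply mul_le_mul_of_nonneg_left _ (norm_nonneg a)
        rw [← tsum_geometric_of_lt_one (norm_nonneg q) hq]
        exact Summable.sum_le_tsum _ (fun i _ => by positivity)
          (summable_geometric_of_lt_one (norm_nonneg q) hq)

lemma qb_qPoch_q_norm_ge {q : ℂ} (hq : ‖q‖ < 1) (k : ℕ) :
    Real.exp (-(‖q‖ / (1 - ‖q‖) ^ 2)) ≤ ‖qPoch q q k‖ := by
  have h1 : (0:ℝ) < 1 - ‖q‖ := by linarith
  rw [qPoch, norm_prod]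
  calc Real.exp (-(‖q‖ / (1 - ‖q‖) ^ 2))
      ≤ Real.exp (∑ i ∈ range k, -(‖q‖ ^ (i + 1) / (1 - ‖q‖))) := by
        apply Real.exp_le_exp.2
        rw [Finset.sum_neg_distrib, neg_le_neg_iff]
        have : ∑ i ∈ range k, ‖q‖ ^ (i + 1) / (1 - ‖q‖) ≤ ‖q‖ / (1 - ‖q‖) ^ 2 := by
          rw [← Finset.sum_div]
          rw [div_le_div_iff₀ h1 (by positivity)]
          have hsum : ∑ i ∈ range k, ‖q‖ ^ (i + 1) ≤ ‖q‖ * (1 - ‖q‖)⁻¹ := by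
            have : ∀ i ∈ range k, ‖q‖ ^ (i + 1) = ‖q‖ * ‖q‖ ^ i := fun i _ => by ring
            rw [Finset.sum_congr rfl this, ← Finset.mul_sum]
            apply mul_le_mul_of_nonneg_left _ (norm_nonneg q)
            rw [← tsum_geometric_of_lt_one (norm_nonneg q) hq]
            exact Summable.sum_le_tsum _ (fun i _ => by positivity)
              (summable_geometric_of_lt_one (norm_nonneg q) hq)
          have hsum' := mul_le_mul_of_nonneg_right hsum h1.le
          have he : ‖q‖ * (1 - ‖q‖)⁻¹ * (1 - ‖q‖) = ‖q‖ := by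
            rw [mul_assoc, inv_mul_cancel₀ h1.ne', mul_one]
          rw [he] at hsum'
          nlinarith [hsum', h1]
        exact this
    _ = ∏ i ∈ range k, Real.exp (-(‖q‖ ^ (i + 1) / (1 - ‖q‖))) := Real.exp_sum _ _
    _ ≤ ∏ i ∈ range k, ‖1 - q * q ^ i‖ := by
        apply Finset.prod_le_prod (fun i _ => (Real.exp_pos _).le)
        intro i _
        have hp : ‖q‖ ^ (i + 1) ≤ ‖q‖ := pow_le_of_le_one (norm_nonneg q) hq.le (Nat.succ_ne_zero i)
        calc Real.exp (-(‖q‖ ^ (i + 1) / (1 - ‖q‖)))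
            ≤ 1 - ‖q‖ ^ (i + 1) := qb_exp_neg_le_one_sub hq (by positivity) hp
          _ = ‖(1:ℂ)‖ - ‖q * q ^ i‖ := by
              rw [norm_one, norm_mul, norm_pow]; ring_nf
          _ ≤ ‖1 - q * q ^ i‖ := norm_sub_norm_le _ _

/-- uniform bound on coefficients -/
lemma qb_coef_bound (a : ℂ) {q : ℂ} (hq : ‖q‖ < 1) :
    ∃ M : ℝ, 0 < M ∧ ∀ k, ‖qPoch a q k / qPoch q q k‖ ≤ M := by
  refine ⟨Real.exp (‖a‖ / (1 - ‖q‖)) / Real.exp (-(‖q‖ / (1 - ‖q‖) ^ 2)),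
    by positivity, fun k => ?_⟩
  rw [norm_div]
  exact div_le_div₀ (Real.exp_pos _).le (qb_qPoch_norm_le a hq k) (Real.exp_pos _)
    (qb_qPoch_q_norm_ge hq k)

lemma qb_summable (a : ℂ) {q y : ℂ} (hq : ‖q‖ < 1) (hy : ‖y‖ < 1) :
    Summable (fun k => (qPoch a q k / qPoch q q k) * y ^ k) := by
  obtain ⟨M, hM, hMb⟩ := qb_coef_bound a hq
  apply Summable.of_norm_bounded (g := fun k => M * ‖y‖ ^ k)
    ((summable_geometric_of_lt_one (norm_nonneg y) hy).mul_left M)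
  intro k
  rw [norm_mul, norm_pow]
  exact mul_le_mul_of_nonneg_right (hMb k) (by positivity)

/-- the sum side -/
noncomputable def qbS (a q y : ℂ) : ℂ := ∑' k : ℕ, (qPoch a q k / qPoch q q k) * y ^ k

/-- the coefficient recursion -/
lemma qb_coef_rec (a : ℂ) {q : ℂ} (hq : ‖q‖ < 1) (k : ℕ) :
    qPoch a q (k + 1) / qPoch q q (k + 1) * (1 - q * q ^ k) =
      qPoch a q k / qPoch q q k * (1 - a * q ^ k) := by
  have h1 : qPoch q q (k + 1) ≠ 0 := qb_qPoch_q_ne_zero hq (k + 1)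
  have h2 : qPoch q q k ≠ 0 := qb_qPoch_q_ne_zero hq k
  have ha : qPoch a q (k + 1) = qPoch a q k * (1 - a * q ^ k) := Finset.prod_range_succ _ _
  have hb : qPoch q q (k + 1) = qPoch q q k * (1 - q * q ^ k) := Finset.prod_range_succ _ _
  rw [ha, hb]
  have h3 : (1 - q * q ^ k) ≠ 0 := by
    rw [hb] at h1; exact right_ne_zero_of_mul h1
  rw [div_mul_eq_mul_div, div_mul_eq_mul_div, div_eq_div_iff (mul_ne_zero h2 h3) h2]
  ring

/-- the functional equation `(1-y) S(y) = (1-ay) S(qy)` -/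
lemma qb_funEq (a : ℂ) {q x y : ℂ} (hq : ‖q‖ < 1) (hx : ‖x‖ < 1) (hy : ‖y‖ ≤ ‖x‖) :
    (1 - y) * qbS a q y = (1 - a * y) * qbS a q (q * y) := by
  set c : ℕ → ℂ := fun k => qPoch a q k / qPoch q q k with hc
  have hy1 : ‖y‖ < 1 := lt_of_le_of_lt hy hx
  have hqy1 : ‖q * y‖ < 1 := by
    rw [norm_mul]
    calc ‖q‖ * ‖y‖ ≤ 1 * ‖y‖ := mul_le_mul_of_nonneg_right hq.le (norm_nonneg y)
      _ = ‖y‖ := one_mul _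
      _ < 1 := hy1
  have hs1 : Summable (fun k => c k * y ^ k) := qb_summable a hq hy1
  have hs2 : Summable (fun k => c k * (q * y) ^ k) := qb_summable a hq hqy1
  set g : ℕ → ℂ := fun k => (1 - y) * (c k * y ^ k) with hg
  set h : ℕ → ℂ := fun k => (1 - a * y) * (c k * (q * y) ^ k) with hh
  set u : ℕ → ℂ := fun k => c k * (1 - a * q ^ k) * y ^ (k + 1) with hu
  have hgsum : Summable g := hs1.mul_left _
  have hhsum : Summable h := hs2.mul_left _
  have hdiff : Summable (fun k => g k - h k) := hgsum.sub hhsum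
  have hpartial : ∀ n, ∑ k ∈ range (n + 1), (g k - h k) = -u n := by
    intro n
    induction n with
    | zero =>
      have hc0 : c 0 = 1 := by simp [hc, qPoch]
      rw [Finset.sum_range_one]
      show g 0 - h 0 = -u 0
      simp only [hg, hh, hu, hc0]
      ring
    | succ n ih =>
      rw [Finset.sum_range_succ, ih]
      have hrec := qb_coef_rec a hq n
      simp only [hg, hh, hu]
      linear_combination (y ^ (n + 1)) * hrec
  have hulim : Filter.Tendsto u atTop (𝓝 0) := by
    obtain ⟨M, hM, hMb⟩ := qb_coef_bound a hq
    apply squeeze_zero_norm (a := fun n => (M * (1 + ‖a‖)) * ‖x‖ ^ n)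
    · intro n
      simp only [hu, norm_mul, norm_pow]
      have h1 : ‖1 - a * q ^ n‖ ≤ 1 + ‖a‖ := by
        calc ‖1 - a * q ^ n‖ ≤ ‖(1:ℂ)‖ + ‖a * q ^ n‖ := norm_sub_le _ _
          _ = 1 + ‖a‖ * ‖q‖ ^ n := by rw [norm_one, norm_mul, norm_pow]
          _ ≤ 1 + ‖a‖ * 1 := by
              have := pow_le_one₀ (norm_nonneg q) hq.le (n := n)
              nlinarith [norm_nonneg a]
          _ = 1 + ‖a‖ := by ring
      have h2 : ‖y‖ ^ (n + 1) ≤ ‖x‖ ^ n := by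
        calc ‖y‖ ^ (n + 1) ≤ ‖x‖ ^ (n + 1) :=
              pow_le_pow_left₀ (norm_nonneg y) hy _
          _ ≤ ‖x‖ ^ n := pow_le_pow_of_le_one (norm_nonneg x) hx.le (Nat.le_succ n)
      calc ‖c n‖ * ‖1 - a * q ^ n‖ * ‖y‖ ^ (n + 1)
          ≤ M * (1 + ‖a‖) * ‖x‖ ^ n := by
            apply mul_le_mul _ h2 (by positivity) (by positivity)
            exact mul_le_mul (hMb n) h1 (norm_nonneg _) hM.le
        _ = M * (1 + ‖a‖) * ‖x‖ ^ n := rfl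
    · rw [show (0:ℝ) = (M * (1 + ‖a‖)) * 0 by ring]
      exact (tendsto_pow_atTop_nhds_zero_of_lt_one (norm_nonneg x) hx).const_mul _
  have hlim : Filter.Tendsto (fun n => ∑ k ∈ range n, (g k - h k)) atTop (𝓝 0) := by
    rw [← Filter.tendsto_add_atTop_iff_nat 1]
    have : (fun n => ∑ k ∈ range (n + 1), (g k - h k)) = fun n => -u n := funext hpartial
    rw [this, show (0:ℂ) = -0 by ring]
    exact hulim.neg
  have hzero : ∑' k, (g k - h k) = 0 :=
    tendsto_nhds_unique hdiff.hasSum.tendsto_sum_nat hlim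
  rw [Summable.tsum_sub hgsum hhsum, sub_eq_zero] at hzero
  calc (1 - y) * qbS a q y = ∑' k, g k := tsum_mul_left.symm
    _ = ∑' k, h k := hzero
    _ = (1 - a * y) * qbS a q (q * y) := tsum_mul_left

lemma qb_norm_pow_mul_le {q x : ℂ} (hq : ‖q‖ < 1) (n : ℕ) : ‖q ^ n * x‖ ≤ ‖x‖ := by
  rw [norm_mul, norm_pow]
  calc ‖q‖ ^ n * ‖x‖ ≤ 1 * ‖x‖ :=
        mul_le_mul_of_nonneg_right (pow_le_one₀ (norm_nonneg q) hq.le) (norm_nonneg x)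
    _ = ‖x‖ := one_mul _

/-- the iterated functional equation -/
lemma qb_iterate (a : ℂ) {q x : ℂ} (hq : ‖q‖ < 1) (hx : ‖x‖ < 1) (n : ℕ) :
    (∏ i ∈ range n, (1 - x * q ^ i)) * qbS a q x =
      (∏ i ∈ range n, (1 - a * x * q ^ i)) * qbS a q (q ^ n * x) := by
  induction n with
  | zero => simp
  | succ n ih =>
    have key := qb_funEq a hq hx (qb_norm_pow_mul_le hq n (x := x))
    rw [Finset.prod_range_succ, Finset.prod_range_succ]
    calc (∏ i ∈ range n, (1 - x * q ^ i)) * (1 - x * q ^ n) * qbS a q x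
        = (1 - x * q ^ n) * ((∏ i ∈ range n, (1 - x * q ^ i)) * qbS a q x) := by ring
      _ = (1 - x * q ^ n) * ((∏ i ∈ range n, (1 - a * x * q ^ i)) * qbS a q (q ^ n * x)) := by
          rw [ih]
      _ = (∏ i ∈ range n, (1 - a * x * q ^ i)) * ((1 - q ^ n * x) * qbS a q (q ^ n * x)) := by
          ring
      _ = (∏ i ∈ range n, (1 - a * x * q ^ i)) * ((1 - a * (q ^ n * x)) *
            qbS a q (q * (q ^ n * x))) := by rw [key]
      _ = (∏ i ∈ range n, (1 - a * x * q ^ i)) * (1 - a * x * q ^ n) *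
            qbS a q (q ^ (n + 1) * x) := by
          rw [show q * (q ^ n * x) = q ^ (n + 1) * x by ring]; ring

/-- `S(q^n x) → 1` -/
lemma qb_S_tendsto_one (a : ℂ) {q x : ℂ} (hq : ‖q‖ < 1) (hx : ‖x‖ < 1) :
    Filter.Tendsto (fun n => qbS a q (q ^ n * x)) atTop (𝓝 1) := by
  obtain ⟨M, hM, hMb⟩ := qb_coef_bound a hq
  rw [tendsto_iff_norm_sub_tendsto_zero]
  apply squeeze_zero_norm (a := fun n => (M * ‖x‖ * (1 - ‖x‖)⁻¹) * ‖q‖ ^ n)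
  · intro n
    rw [norm_norm]
    set y : ℂ := q ^ n * x with hy
    have hyx : ‖y‖ ≤ ‖x‖ := qb_norm_pow_mul_le hq n
    have hy1 : ‖y‖ < 1 := lt_of_le_of_lt hyx hx
    have hsum : Summable (fun k => (qPoch a q k / qPoch q q k) * y ^ k) :=
      qb_summable a hq hy1
    have hsplit : qbS a q y - 1 = ∑' k : ℕ, (qPoch a q (k + 1) / qPoch q q (k + 1)) * y ^ (k + 1) := by
      rw [qbS, Summable.tsum_eq_zero_add hsum]
      simp [qPoch]
    rw [hsplit]
    have hbnd : ∀ k : ℕ, ‖(qPoch a q (k + 1) / qPoch q q (k + 1)) * y ^ (k + 1)‖ ≤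
        (M * ‖y‖) * ‖x‖ ^ k := by
      intro k
      rw [norm_mul, norm_pow, pow_succ']
      calc ‖qPoch a q (k + 1) / qPoch q q (k + 1)‖ * (‖y‖ * ‖y‖ ^ k)
          ≤ M * (‖y‖ * ‖x‖ ^ k) := by
            apply mul_le_mul (hMb _) _ (by positivity) hM.le
            exact mul_le_mul_of_nonneg_left (pow_le_pow_left₀ (norm_nonneg y) hyx k)
              (norm_nonneg y)
        _ = M * ‖y‖ * ‖x‖ ^ k := by ring
    have hsub : Summable (fun k => (qPoch a q (k + 1) / qPoch q q (k + 1)) * y ^ (k + 1)) :=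
      Summable.of_norm_bounded
        ((summable_geometric_of_lt_one (norm_nonneg x) hx).mul_left _) hbnd
    calc ‖∑' k : ℕ, (qPoch a q (k + 1) / qPoch q q (k + 1)) * y ^ (k + 1)‖
        ≤ ∑' k : ℕ, ‖(qPoch a q (k + 1) / qPoch q q (k + 1)) * y ^ (k + 1)‖ :=
          norm_tsum_le_tsum_norm hsub.norm
      _ ≤ ∑' k : ℕ, (M * ‖y‖) * ‖x‖ ^ k := by
          apply Summable.tsum_le_tsum hbnd hsub.norm
            ((summable_geometric_of_lt_one (norm_nonneg x) hx).mul_left _)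
      _ = (M * ‖y‖) * (1 - ‖x‖)⁻¹ := by
          rw [tsum_mul_left, tsum_geometric_of_lt_one (norm_nonneg x) hx]
      _ ≤ (M * ‖x‖ * (1 - ‖x‖)⁻¹) * ‖q‖ ^ n := by
          have : ‖y‖ = ‖q‖ ^ n * ‖x‖ := by rw [hy, norm_mul, norm_pow]
          rw [this]
          have hx1 : (0:ℝ) ≤ (1 - ‖x‖)⁻¹ := by
            have : (0:ℝ) < 1 - ‖x‖ := by linarith
            positivity
          apply le_of_eq; ring
  · rw [show (0:ℝ) = (M * ‖x‖ * (1 - ‖x‖)⁻¹) * 0 by ring]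
    exact (tendsto_pow_atTop_nhds_zero_of_lt_one (norm_nonneg q) hq).const_mul _

lemma qb_log_summable {z q : ℂ} (hq : ‖q‖ < 1) :
    Summable (fun n : ℕ => Complex.log (1 - z * q ^ n)) := by
  apply Summable.of_norm_bounded_eventually_nat (g := fun n => (3 / 2 * ‖z‖) * ‖q‖ ^ n)
    ((summable_geometric_of_lt_one (norm_nonneg q) hq).mul_left _)
  have hev : ∀ᶠ n : ℕ in atTop, ‖z‖ * ‖q‖ ^ n ≤ 1 / 2 := by
    have : Filter.Tendsto (fun n => ‖z‖ * ‖q‖ ^ n) atTop (𝓝 (‖z‖ * 0)) :=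
      (tendsto_pow_atTop_nhds_zero_of_lt_one (norm_nonneg q) hq).const_mul _
    rw [mul_zero] at this
    exact this.eventually_le_const (by norm_num)
  filter_upwards [hev] with n hn
  have h1 : ‖-(z * q ^ n)‖ ≤ 1 / 2 := by
    rw [norm_neg, norm_mul, norm_pow]; exact hn
  calc ‖Complex.log (1 - z * q ^ n)‖ = ‖Complex.log (1 + -(z * q ^ n))‖ := by
        rw [sub_eq_add_neg]
    _ ≤ 3 / 2 * ‖-(z * q ^ n)‖ := Complex.norm_log_one_add_half_le_self h1
    _ ≤ 3 / 2 * ‖z‖ * ‖q‖ ^ n := by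
        rw [norm_neg, norm_mul, norm_pow]; apply le_of_eq; ring

lemma qb_hasProd (z : ℂ) {q : ℂ} (hq : ‖q‖ < 1) :
    HasProd (fun n : ℕ => 1 - z * q ^ n) (qPochInf z q) := by
  by_cases h0 : ∀ n : ℕ, 1 - z * q ^ n ≠ 0
  · exact (Complex.multipliable_of_summable_log (qb_log_summable hq)).hasProd
  · push_neg at h0
    obtain ⟨m, hm⟩ := h0
    have hp0 : HasProd (fun n : ℕ => 1 - z * q ^ n) 0 := by
      rw [HasProd]
      apply Filter.Tendsto.congr' _ tendsto_const_nhds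
      filter_upwards [Filter.eventually_ge_atTop ({m} : Finset ℕ)] with s hs
      exact (Finset.prod_eq_zero (hs (Finset.mem_singleton_self m)) hm).symm
    have : qPochInf z q = 0 := hp0.tprod_eq
    rw [this]
    exact hp0

lemma qb_qPochInf_ne_zero (z : ℂ) {q : ℂ} (hq : ‖q‖ < 1)
    (h0 : ∀ n : ℕ, 1 - z * q ^ n ≠ 0) : qPochInf z q ≠ 0 := by
  have := Complex.cexp_tsum_eq_tprod (f := fun n : ℕ => 1 - z * q ^ n)
    (fun n => h0 n) (qb_log_summable hq)
  rw [qPochInf, ← this]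
  exact Complex.exp_ne_zero _

/-- the q-binomial theorem: for `|q| < 1` and `|x| < 1`,
`Σ_{k≥0} ((a;q)_k/(q;q)_k) x^k = (ax;q)_∞/(x;q)_∞`. -/
theorem q_binomial_theorem (a q x : ℂ) (hq : ‖q‖ < 1) (hx : ‖x‖ < 1) :
    ∑' k : ℕ, (qPoch a q k / qPoch q q k) * x ^ k =
      qPochInf (a * x) q / qPochInf x q := by
  have key : qPochInf x q * qbS a q x = qPochInf (a * x) q := by
    have h1 : Filter.Tendsto (fun n => (∏ i ∈ range n, (1 - x * q ^ i)) * qbS a q x)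
        atTop (𝓝 (qPochInf x q * qbS a q x)) :=
      ((qb_hasProd x hq).tendsto_prod_nat).mul_const _
    have h2 : Filter.Tendsto (fun n => (∏ i ∈ range n, (1 - a * x * q ^ i)) *
        qbS a q (q ^ n * x)) atTop (𝓝 (qPochInf (a * x) q * 1)) := by
      have hp : HasProd (fun n : ℕ => 1 - a * x * q ^ n) (qPochInf (a * x) q) := by
        have := qb_hasProd (a * x) hq
        simpa using this
      exact (hp.tendsto_prod_nat).mul (qb_S_tendsto_one a hq hx)
    have h1' : Filter.Tendsto (fun n => (∏ i ∈ range n, (1 - a * x * q ^ i)) *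
        qbS a q (q ^ n * x)) atTop (𝓝 (qPochInf x q * qbS a q x)) :=
      h1.congr (fun n => qb_iterate a hq hx n)
    have := tendsto_nhds_unique h1' h2
    rw [mul_one] at this
    exact this
  have hne : qPochInf x q ≠ 0 := by
    apply qb_qPochInf_ne_zero x hq
    intro n
    apply qb_one_sub_ne_zero
    rw [norm_mul, norm_pow]
    calc ‖x‖ * ‖q‖ ^ n ≤ ‖x‖ * 1 :=
          mul_le_mul_of_nonneg_left (pow_le_one₀ (norm_nonneg q) hq.le) (norm_nonneg x)
      _ = ‖x‖ := mul_one _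
      _ < 1 := hx
  have : qbS a q x = qPochInf (a * x) q / qPochInf x q := by
    rw [eq_div_iff hne]
    linear_combination key
  exact this
end

section
/- For a 2n×2n skew-symmetric tridiagonal matrix B with superdiagonal entries α₁, …, α_{2n−1}, and any even-size subset μ = {μ₁ < … < μ_{2m}} ⊆ {1,…,2n}, the sub-Pfaffian Pf(B^μ_μ) (Pfaffian of the submatrix of B on rows and columns μ) is zero unless μ_{2k} = μ_{2k−1} + 1 for all k = 1,…,m, in which case Pf(B^μ_μ) = ∏_{k=1}^{m} α_{μ_{2k−1}}. -/
open Finset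

/-- The Pfaffian of a `2n × 2n` skew-symmetric complex matrix, via the
permutation-sum formula `Pf(A) = (2^n n!)⁻¹ Σ_σ sgn(σ) ∏_k A_{σ(2k-1), σ(2k)}`. -/
noncomputable def pfaffian (n : ℕ) (A : Matrix (Fin (2 * n)) (Fin (2 * n)) ℂ) : ℂ :=
  ((2 : ℂ) ^ n * (n.factorial : ℂ))⁻¹ *
    ∑ σ : Equiv.Perm (Fin (2 * n)),
      ((Equiv.Perm.sign σ : ℤ) : ℂ) *
        ∏ k : Fin n,
          A (σ ⟨2 * (k : ℕ), by have := k.isLt; omega⟩)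
            (σ ⟨2 * (k : ℕ) + 1, by have := k.isLt; omega⟩)

namespace SubPf

variable {m : ℕ}

/-- even position -/
def ev (m : ℕ) (k : Fin m) : Fin (2*m) := ⟨2*(k:ℕ), by have := k.isLt; omega⟩
/-- odd position -/
def od (m : ℕ) (k : Fin m) : Fin (2*m) := ⟨2*(k:ℕ)+1, by have := k.isLt; omega⟩

@[simp] lemma ev_coe (k : Fin m) : ((ev m k : Fin (2*m)) : ℕ) = 2*(k:ℕ) := rfl
@[simp] lemma od_coe (k : Fin m) : ((od m k : Fin (2*m)) : ℕ) = 2*(k:ℕ)+1 := rfl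

lemma ev_ne_od (k l : Fin m) : ev m k ≠ od m l := by
  intro h; have := congrArg (Fin.val) h; simp [ev, od] at this; omega

/-- half -/
def hf (x : Fin (2*m)) : Fin m := ⟨(x:ℕ)/2, by have := x.isLt; omega⟩

@[simp] lemma hf_ev (k : Fin m) : hf (ev m k) = k := by
  ext; simp only [hf, ev_coe]; omega

@[simp] lemma hf_od (k : Fin m) : hf (od m k) = k := by
  ext; simp only [hf, od_coe]; omega

/-- block permutation -/
def P (τ : Equiv.Perm (Fin m)) : Equiv.Perm (Fin (2*m)) where
  toFun x := ⟨2*((τ (hf x) : Fin m) : ℕ) + (x:ℕ)%2, by have := (τ (hf x)).isLt; omega⟩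
  invFun y := ⟨2*((τ.symm (hf y) : Fin m) : ℕ) + (y:ℕ)%2, by have := (τ.symm (hf y)).isLt; omega⟩
  left_inv x := by
    ext
    have h1 : hf (⟨2*((τ (hf x) : Fin m) : ℕ) + (x:ℕ)%2, by have := (τ (hf x)).isLt; omega⟩ :
        Fin (2*m)) = τ (hf x) := by ext; simp [hf]; omega
    simp only [h1, Equiv.symm_apply_apply]
    have := x.isLt
    simp [hf]
    omega
  right_inv y := by
    ext
    have h1 : hf (⟨2*((τ.symm (hf y) : Fin m) : ℕ) + (y:ℕ)%2, by have := (τ.symm (hf y)).isLt; omega⟩ :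
        Fin (2*m)) = τ.symm (hf y) := by ext; simp [hf]; omega
    simp only [h1, Equiv.apply_symm_apply]
    have := y.isLt
    simp [hf]
    omega

@[simp] lemma P_coe (τ : Equiv.Perm (Fin m)) (x : Fin (2*m)) :
    ((P τ x : Fin (2*m)) : ℕ) = 2*((τ (hf x) : Fin m) : ℕ) + (x:ℕ)%2 := rfl

/-- flip function -/
def Dfun (ε : Fin m → Bool) (x : Fin (2*m)) : Fin (2*m) :=
  if ε (hf x) then ⟨2*((x:ℕ)/2) + (1 - (x:ℕ)%2), by have := x.isLt; omega⟩ else x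

lemma Dfun_invol (ε : Fin m → Bool) : Function.Involutive (Dfun ε) := by
  intro x
  by_cases h : ε (hf x)
  · have h2 : hf (⟨2*((x:ℕ)/2) + (1 - (x:ℕ)%2), by have := x.isLt; omega⟩ : Fin (2*m)) = hf x := by
      ext; simp [hf]; omega
    simp only [Dfun, h, if_pos, h2]
    ext
    have := x.isLt
    simp
    omega
  · simp only [Dfun, h, if_neg, Bool.false_eq_true, not_false_iff, ite_false]

def D (ε : Fin m → Bool) : Equiv.Perm (Fin (2*m)) := (Dfun_invol ε).toPerm

@[simp] lemma D_apply (ε : Fin m → Bool) (x : Fin (2*m)) : D ε x = Dfun ε x := rfl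

def phi (τ : Equiv.Perm (Fin m)) (ε : Fin m → Bool) : Equiv.Perm (Fin (2*m)) := D ε * P τ

lemma P_ev (τ : Equiv.Perm (Fin m)) (k : Fin m) : P τ (ev m k) = ev m (τ k) := by
  ext; simp only [P_coe, hf_ev, ev_coe]; omega

lemma P_od (τ : Equiv.Perm (Fin m)) (k : Fin m) : P τ (od m k) = od m (τ k) := by
  ext; simp only [P_coe, hf_od, od_coe]; omega

lemma D_ev (ε : Fin m → Bool) (k : Fin m) :
    ((D ε (ev m k) : Fin (2*m)) : ℕ) = 2*(k:ℕ) + (if ε k then 1 else 0) := by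
  by_cases h : ε k
  · simp only [D_apply, Dfun, hf_ev, h, if_true, ev_coe]; omega
  · simp only [D_apply, Dfun, hf_ev, h, Bool.false_eq_true, if_false, ev_coe]; omega

lemma D_od (ε : Fin m → Bool) (k : Fin m) :
    ((D ε (od m k) : Fin (2*m)) : ℕ) = 2*(k:ℕ) + (if ε k then 0 else 1) := by
  by_cases h : ε k
  · simp only [D_apply, Dfun, hf_od, h, if_true, od_coe]; omega
  · simp only [D_apply, Dfun, hf_od, h, Bool.false_eq_true, if_false, od_coe]

lemma phi_apply_ev (τ : Equiv.Perm (Fin m)) (ε : Fin m → Bool) (k : Fin m) :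
    ((phi τ ε (ev m k) : Fin (2*m)) : ℕ) = 2*((τ k : Fin m) : ℕ) + (if ε (τ k) then 1 else 0) := by
  show ((D ε (P τ (ev m k)) : Fin (2*m)) : ℕ) = _
  rw [P_ev, D_ev]

lemma phi_apply_od (τ : Equiv.Perm (Fin m)) (ε : Fin m → Bool) (k : Fin m) :
    ((phi τ ε (od m k) : Fin (2*m)) : ℕ) = 2*((τ k : Fin m) : ℕ) + (if ε (τ k) then 0 else 1) := by
  show ((D ε (P τ (od m k)) : Fin (2*m)) : ℕ) = _
  rw [P_od, D_od]

end SubPf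

namespace SubPf

variable {m : ℕ}

lemma ev_inj {k l : Fin m} (h : ev m k = ev m l) : k = l := by
  have := congrArg Fin.val h; simp only [ev_coe] at this; ext; omega

lemma od_inj {k l : Fin m} (h : od m k = od m l) : k = l := by
  have := congrArg Fin.val h; simp only [od_coe] at this; ext; omega

lemma ev_ne_ev {k l : Fin m} (h : k ≠ l) : ev m k ≠ ev m l := fun hh => h (ev_inj hh)
lemma od_ne_od {k l : Fin m} (h : k ≠ l) : od m k ≠ od m l := fun hh => h (od_inj hh)
lemma od_ne_ev (k l : Fin m) : od m k ≠ ev m l := (ev_ne_od l k).symm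

lemma fin2m_cases (x : Fin (2*m)) : x = ev m (hf x) ∨ x = od m (hf x) := by
  by_cases h : (x:ℕ) % 2 = 0
  · left; ext; simp only [ev_coe, hf]; omega
  · right; ext; simp only [od_coe, hf]; omega

noncomputable def Term (A : Matrix (Fin (2*m)) (Fin (2*m)) ℂ) (σ : Equiv.Perm (Fin (2*m))) : ℂ :=
  ((Equiv.Perm.sign σ : ℤ) : ℂ) * ∏ k : Fin m, A (σ (ev m k)) (σ (od m k))

lemma term_one (A : Matrix (Fin (2*m)) (Fin (2*m)) ℂ) :
    Term A 1 = ∏ k : Fin m, A (ev m k) (od m k) := by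
  simp [Term]

lemma term_pairswap (A : Matrix (Fin (2*m)) (Fin (2*m)) ℂ)
    (hskew : ∀ i j, A j i = - A i j) (σ : Equiv.Perm (Fin (2*m))) (k : Fin m) :
    Term A (σ * Equiv.swap (ev m k) (od m k)) = Term A σ := by
  have hne : ev m k ≠ od m k := ev_ne_od k k
  unfold Term
  rw [Equiv.Perm.sign_mul, Equiv.Perm.sign_swap hne]
  have hprod : (∏ l : Fin m, A ((σ * Equiv.swap (ev m k) (od m k)) (ev m l))
      ((σ * Equiv.swap (ev m k) (od m k)) (od m l)))
      = - ∏ l : Fin m, A (σ (ev m l)) (σ (od m l)) := by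
    rw [← Finset.prod_erase_mul univ _ (mem_univ k),
        ← Finset.prod_erase_mul univ _ (mem_univ k)]
    have h2 : ∀ l ∈ univ.erase k,
        A ((σ * Equiv.swap (ev m k) (od m k)) (ev m l))
          ((σ * Equiv.swap (ev m k) (od m k)) (od m l))
        = A (σ (ev m l)) (σ (od m l)) := by
      intro l hl
      have hlk : l ≠ k := (Finset.mem_erase.mp hl).1
      rw [Equiv.Perm.mul_apply, Equiv.Perm.mul_apply,
        Equiv.swap_apply_of_ne_of_ne (ev_ne_ev hlk) (ev_ne_od l k),
        Equiv.swap_apply_of_ne_of_ne (od_ne_ev l k) (od_ne_od hlk)]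
    rw [Finset.prod_congr rfl h2]
    have h3 : A ((σ * Equiv.swap (ev m k) (od m k)) (ev m k))
        ((σ * Equiv.swap (ev m k) (od m k)) (od m k))
        = - A (σ (ev m k)) (σ (od m k)) := by
      rw [Equiv.Perm.mul_apply, Equiv.Perm.mul_apply, Equiv.swap_apply_left,
        Equiv.swap_apply_right, hskew]
    rw [h3]; ring
  rw [hprod]
  push_cast
  ring

lemma rho_ev {a b : Fin m} (l : Fin m) :
    (Equiv.swap (ev m a) (ev m b) * Equiv.swap (od m a) (od m b)) (ev m l)
      = ev m (Equiv.swap a b l) := by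
  rw [Equiv.Perm.mul_apply, Equiv.swap_apply_of_ne_of_ne (ev_ne_od l a) (ev_ne_od l b)]
  by_cases h1 : l = a
  · subst h1; rw [Equiv.swap_apply_left, Equiv.swap_apply_left]
  · by_cases h2 : l = b
    · subst h2; rw [Equiv.swap_apply_right, Equiv.swap_apply_right]
    · rw [Equiv.swap_apply_of_ne_of_ne (ev_ne_ev h1) (ev_ne_ev h2),
        Equiv.swap_apply_of_ne_of_ne h1 h2]

lemma rho_od {a b : Fin m} (l : Fin m) :
    (Equiv.swap (ev m a) (ev m b) * Equiv.swap (od m a) (od m b)) (od m l)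
      = od m (Equiv.swap a b l) := by
  rw [Equiv.Perm.mul_apply]
  by_cases h1 : l = a
  · subst h1; rw [Equiv.swap_apply_left, Equiv.swap_apply_of_ne_of_ne (od_ne_ev b l) (od_ne_ev b b),
      Equiv.swap_apply_left]
  · by_cases h2 : l = b
    · subst h2; rw [Equiv.swap_apply_right,
        Equiv.swap_apply_of_ne_of_ne (od_ne_ev a a) (od_ne_ev a l), Equiv.swap_apply_right]
    · rw [Equiv.swap_apply_of_ne_of_ne (od_ne_od h1) (od_ne_od h2),
        Equiv.swap_apply_of_ne_of_ne (od_ne_ev l a) (od_ne_ev l b),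
        Equiv.swap_apply_of_ne_of_ne h1 h2]

lemma term_blockswap (A : Matrix (Fin (2*m)) (Fin (2*m)) ℂ)
    (σ : Equiv.Perm (Fin (2*m))) {a b : Fin m} (hab : a ≠ b) :
    Term A (σ * (Equiv.swap (ev m a) (ev m b) * Equiv.swap (od m a) (od m b))) = Term A σ := by
  unfold Term
  rw [Equiv.Perm.sign_mul, Equiv.Perm.sign_mul, Equiv.Perm.sign_swap (ev_ne_ev hab),
    Equiv.Perm.sign_swap (od_ne_od hab)]
  have hprod : (∏ l : Fin m,
      A ((σ * (Equiv.swap (ev m a) (ev m b) * Equiv.swap (od m a) (od m b))) (ev m l))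
        ((σ * (Equiv.swap (ev m a) (ev m b) * Equiv.swap (od m a) (od m b))) (od m l)))
      = ∏ l : Fin m, A (σ (ev m l)) (σ (od m l)) := by
    have h1 : ∀ l : Fin m,
        A ((σ * (Equiv.swap (ev m a) (ev m b) * Equiv.swap (od m a) (od m b))) (ev m l))
          ((σ * (Equiv.swap (ev m a) (ev m b) * Equiv.swap (od m a) (od m b))) (od m l))
        = A (σ (ev m (Equiv.swap a b l))) (σ (od m (Equiv.swap a b l))) := by
      intro l
      rw [Equiv.Perm.mul_apply, rho_ev, Equiv.Perm.mul_apply, rho_od]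
    rw [Finset.prod_congr rfl (fun l _ => h1 l)]
    exact Equiv.prod_comp (Equiv.swap a b) (fun l => A (σ (ev m l)) (σ (od m l)))
  rw [hprod]
  push_cast
  ring


lemma P_one : P (1 : Equiv.Perm (Fin m)) = 1 := by
  apply Equiv.ext; intro x
  ext
  simp only [P_coe, Equiv.Perm.one_apply, hf]
  have := x.isLt
  omega

lemma P_mul (τ τ' : Equiv.Perm (Fin m)) : P (τ * τ') = P τ * P τ' := by
  apply Equiv.ext; intro x
  rcases fin2m_cases x with h | h <;> rw [h]
  · rw [P_ev, Equiv.Perm.mul_apply, Equiv.Perm.mul_apply, P_ev, P_ev]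
  · rw [P_od, Equiv.Perm.mul_apply, Equiv.Perm.mul_apply, P_od, P_od]

lemma P_swap {a b : Fin m} :
    P (Equiv.swap a b) = Equiv.swap (ev m a) (ev m b) * Equiv.swap (od m a) (od m b) := by
  apply Equiv.ext; intro x
  rcases fin2m_cases x with h | h <;> rw [h]
  · rw [P_ev, rho_ev]
  · rw [P_od, rho_od]

lemma term_P (A : Matrix (Fin (2*m)) (Fin (2*m)) ℂ) (τ : Equiv.Perm (Fin m)) :
    Term A (P τ) = Term A 1 := by
  refine Equiv.Perm.swap_induction_on' τ (by rw [P_one]) ?_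
  intro f a b hab ih
  rw [P_mul, P_swap, term_blockswap A _ hab, ih]

lemma phi_false (τ : Equiv.Perm (Fin m)) : phi τ (fun _ => false) = P τ := by
  apply Equiv.ext; intro x
  show D (fun _ => false) (P τ x) = P τ x
  simp [Dfun]

lemma phi_eps_step (τ : Equiv.Perm (Fin m)) (ε : Fin m → Bool) (j : Fin m) (hj : ε j = true) :
    phi τ ε = phi τ (Function.update ε j false)
      * Equiv.swap (ev m (τ.symm j)) (od m (τ.symm j)) := by
  apply Equiv.ext; intro x
  rw [Equiv.Perm.mul_apply]
  rcases fin2m_cases x with h | h <;> rw [h] <;> set k := hf x with hk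
  · by_cases hkj : k = τ.symm j
    · rw [hkj, Equiv.swap_apply_left]
      ext
      rw [phi_apply_ev, phi_apply_od, Equiv.apply_symm_apply, Function.update_self, hj]
      simp
    · have hτ : τ k ≠ j := fun hh => hkj (by rw [← hh, Equiv.symm_apply_apply])
      rw [Equiv.swap_apply_of_ne_of_ne (ev_ne_ev hkj) (ev_ne_od k (τ.symm j))]
      ext
      rw [phi_apply_ev, phi_apply_ev, Function.update_of_ne hτ]
  · by_cases hkj : k = τ.symm j
    · rw [hkj, Equiv.swap_apply_right]
      ext
      rw [phi_apply_od, phi_apply_ev, Equiv.apply_symm_apply, Function.update_self, hj]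
      simp
    · have hτ : τ k ≠ j := fun hh => hkj (by rw [← hh, Equiv.symm_apply_apply])
      rw [Equiv.swap_apply_of_ne_of_ne (od_ne_ev k (τ.symm j)) (od_ne_od hkj)]
      ext
      rw [phi_apply_od, phi_apply_od, Function.update_of_ne hτ]

lemma term_phi (A : Matrix (Fin (2*m)) (Fin (2*m)) ℂ)
    (hskew : ∀ i j, A j i = - A i j) (τ : Equiv.Perm (Fin m)) (ε : Fin m → Bool) :
    Term A (phi τ ε) = Term A 1 := by
  have main : ∀ (n : ℕ) (ε : Fin m → Bool),
      (univ.filter (fun j => ε j = true)).card = n → Term A (phi τ ε) = Term A 1 := by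
    intro n
    induction n with
    | zero =>
      intro ε hε
      have hε' : ε = fun _ => false := by
        funext j
        by_contra hcon
        have hj : ε j = true := by revert hcon; cases ε j <;> simp
        have : j ∈ univ.filter (fun j => ε j = true) := by simp [hj]
        rw [Finset.card_eq_zero.mp hε] at this
        exact absurd this (Finset.notMem_empty j)
      rw [hε', phi_false]
      exact term_P A τ
    | succ n ih =>
      intro ε hε
      have hex : ∃ j, ε j = true := by
        by_contra hcon
        push_neg at hcon
        have : univ.filter (fun j => ε j = true) = ∅ := by
          apply Finset.filter_eq_empty_iff.mpr
          intro j _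
          exact hcon j
        rw [this] at hε
        simp at hε
      obtain ⟨j, hj⟩ := hex
      rw [phi_eps_step τ ε j hj, term_pairswap A hskew _ (τ.symm j)]
      apply ih
      have hfil : univ.filter (fun i => (Function.update ε j false i) = true)
          = (univ.filter (fun i => ε i = true)).erase j := by
        ext i
        simp only [Finset.mem_filter, Finset.mem_erase, Finset.mem_univ, true_and]
        by_cases hij : i = j
        · subst hij; simp [Function.update_self]
        · rw [Function.update_of_ne hij]; simp [hij]
      rw [hfil, Finset.card_erase_of_mem (by simp [hj]), hε]
      simp
  exact main _ ε rfl


lemma phi_inj :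
    ∀ p q : Equiv.Perm (Fin m) × (Fin m → Bool), phi p.1 p.2 = phi q.1 q.2 → p = q := by
  rintro ⟨τ, ε⟩ ⟨τ', ε'⟩ h
  have hev : ∀ k, ((phi τ ε (ev m k) : Fin (2*m)) : ℕ)
      = ((phi τ' ε' (ev m k) : Fin (2*m)) : ℕ) := fun k => by rw [h]
  have hτ : τ = τ' := by
    apply Equiv.ext; intro k
    have h1 := hev k
    rw [phi_apply_ev, phi_apply_ev] at h1
    ext
    split_ifs at h1 <;> omega
  subst hτ
  have hε : ε = ε' := by
    funext j
    have h1 := hev (τ.symm j)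
    rw [phi_apply_ev, phi_apply_ev, Equiv.apply_symm_apply] at h1
    cases hx : ε j <;> cases hy : ε' j <;> rw [hx, hy] at h1 <;> simp at h1 ⊢
  rw [hε]

lemma good_mem (σ : Equiv.Perm (Fin (2*m)))
    (hσ : ∀ k : Fin m, ((σ (od m k) : ℕ) = (σ (ev m k) : ℕ) + 1
      ∨ (σ (ev m k) : ℕ) = (σ (od m k) : ℕ) + 1)) :
    ∃ τ ε, σ = phi τ ε := by
  set v : Fin m → ℕ := fun k => (σ (ev m k) : ℕ) with hv
  set w : Fin m → ℕ := fun k => (σ (od m k) : ℕ) with hw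
  set c : Fin m → ℕ := fun k => min (v k) (w k) with hc
  have hc2 : ∀ k, (v k = c k ∧ w k = c k + 1) ∨ (w k = c k ∧ v k = c k + 1) := by
    intro k
    have h0 : c k = min (v k) (w k) := rfl
    have hh3 : v k = (σ (ev m k) : ℕ) := rfl
    have hh4 : w k = (σ (od m k) : ℕ) := rfl
    rcases hσ k with h | h
    · left; omega
    · right; omega
  have hc1 : ∀ k, c k + 1 < 2*m := by
    intro k
    have h1 := (σ (ev m k)).isLt
    have h2 := (σ (od m k)).isLt
    have h3 : v k = (σ (ev m k) : ℕ) := rfl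
    have h4 : w k = (σ (od m k) : ℕ) := rfl
    rcases hc2 k with ⟨h5, h6⟩ | ⟨h5, h6⟩ <;> omega
  have hinj : ∀ k k', k ≠ k' → v k ≠ v k' ∧ v k ≠ w k' ∧ w k ≠ v k' ∧ w k ≠ w k' := by
    intro k k' hkk
    refine ⟨fun heq => ?_, fun heq => ?_, fun heq => ?_, fun heq => ?_⟩
    · exact (ev_ne_ev hkk) (σ.injective (Fin.ext heq))
    · exact (ev_ne_od k k') (σ.injective (Fin.ext heq))
    · exact (od_ne_ev k k') (σ.injective (Fin.ext heq))
    · exact (od_ne_od hkk) (σ.injective (Fin.ext heq))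
  have hsep : ∀ k k', k ≠ k' → c k ≠ c k' ∧ c k + 1 ≠ c k' ∧ c k ≠ c k' + 1 := by
    intro k k' h
    have h1 := hinj k k' h
    rcases hc2 k with ⟨h3, h4⟩ | ⟨h3, h4⟩ <;> rcases hc2 k' with ⟨h5, h6⟩ | ⟨h5, h6⟩ <;> omega
  have hcov : ∀ u, u < 2*m → ∃ j, u = c j ∨ u = c j + 1 := by
    intro u hu
    have hσx : σ (σ.symm ⟨u, hu⟩) = ⟨u, hu⟩ := Equiv.apply_symm_apply σ _
    rcases fin2m_cases (σ.symm ⟨u, hu⟩) with h | h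
    · refine ⟨hf (σ.symm ⟨u, hu⟩), ?_⟩
      have h1 : v (hf (σ.symm ⟨u, hu⟩)) = u := by
        rw [hv]; simp only; rw [← h, hσx]
      rcases hc2 (hf (σ.symm ⟨u, hu⟩)) with ⟨h3, h4⟩ | ⟨h3, h4⟩ <;> omega
    · refine ⟨hf (σ.symm ⟨u, hu⟩), ?_⟩
      have h1 : w (hf (σ.symm ⟨u, hu⟩)) = u := by
        rw [hw]; simp only; rw [← h, hσx]
      rcases hc2 (hf (σ.symm ⟨u, hu⟩)) with ⟨h3, h4⟩ | ⟨h3, h4⟩ <;> omega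
  have heven : ∀ u, ∀ k, c k = u → u % 2 = 0 := by
    intro u
    induction u using Nat.strong_induction_on with
    | _ u ih =>
      intro k hk
      by_contra hodd
      have hu1 : 1 ≤ u := by omega
      have hult : u - 1 < 2*m := by have := hc1 k; omega
      obtain ⟨j, hj⟩ := hcov (u-1) hult
      rcases hj with h1 | h1
      · by_cases hjk : j = k
        · subst hjk; omega
        · have := hsep j k hjk; omega
      · have h2 : c j = u - 2 := by omega
        have h3 : u - 1 = c j + 1 := h1
        have := ih (u-2) (by omega) j h2
        omega
  have hb : Function.Bijective (fun k : Fin m => (⟨c k / 2, by have := hc1 k; omega⟩ : Fin m)) := by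
    rw [← Finite.injective_iff_bijective]
    intro k k' h
    by_contra hkk
    have h1 := (hsep k k' hkk).1
    have he := heven (c k) k rfl
    have he' := heven (c k') k' rfl
    have h2 := congrArg Fin.val h
    simp only at h2
    omega
  set τ : Equiv.Perm (Fin m) := Equiv.ofBijective _ hb with hτdef
  have hτap : ∀ k, ((τ k : Fin m) : ℕ) = c k / 2 := fun k => rfl
  set ε : Fin m → Bool := fun j => decide (v (τ.symm j) % 2 = 1) with hεdef
  refine ⟨τ, ε, ?_⟩
  apply Equiv.ext; intro x
  have hεap : ∀ k, ε (τ k) = decide (v k % 2 = 1) := by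
    intro k; rw [hεdef]; simp only; rw [Equiv.symm_apply_apply]
  rcases fin2m_cases x with h | h <;> rw [h] <;> ext
  · rw [phi_apply_ev]
    set k := hf x
    have hevn := heven (c k) k rfl
    have h2 : 2 * ((τ k : Fin m) : ℕ) = c k := by rw [hτap]; omega
    have hvk : v k = (σ (ev m k) : ℕ) := rfl
    rcases hc2 k with ⟨h3, h4⟩ | ⟨h3, h4⟩
    · rw [hεap, decide_eq_false (by omega)]; simp only [Bool.false_eq_true, if_false]; omega
    · rw [hεap, decide_eq_true (by omega)]; simp only [if_true]; omega
  · rw [phi_apply_od]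
    set k := hf x
    have hevn := heven (c k) k rfl
    have h2 : 2 * ((τ k : Fin m) : ℕ) = c k := by rw [hτap]; omega
    have hwk : w k = (σ (od m k) : ℕ) := rfl
    rcases hc2 k with ⟨h3, h4⟩ | ⟨h3, h4⟩
    · rw [hεap, decide_eq_false (by omega)]; simp only [Bool.false_eq_true, if_false]; omega
    · rw [hεap, decide_eq_true (by omega)]; simp only [if_true]; omega


lemma term_eq_zero (A : Matrix (Fin (2*m)) (Fin (2*m)) ℂ)
    (hA : ∀ i j : Fin (2*m), ((j:ℕ) ≠ (i:ℕ)+1) → ((i:ℕ) ≠ (j:ℕ)+1) → A i j = 0)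
    (σ : Equiv.Perm (Fin (2*m)))
    (h : ¬ ∀ k : Fin m, ((σ (od m k) : ℕ) = (σ (ev m k) : ℕ) + 1
      ∨ (σ (ev m k) : ℕ) = (σ (od m k) : ℕ) + 1)) :
    Term A σ = 0 := by
  push_neg at h
  obtain ⟨k, hk1, hk2⟩ := h
  have hz : A (σ (ev m k)) (σ (od m k)) = 0 := hA _ _ hk1 hk2
  unfold Term
  rw [Finset.prod_eq_zero (mem_univ k) hz, mul_zero]

lemma pf_core (A : Matrix (Fin (2*m)) (Fin (2*m)) ℂ)
    (hA : ∀ i j : Fin (2*m), ((j:ℕ) ≠ (i:ℕ)+1) → ((i:ℕ) ≠ (j:ℕ)+1) → A i j = 0)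
    (hskew : ∀ i j, A j i = - A i j) :
    ∑ σ : Equiv.Perm (Fin (2*m)), Term A σ
      = ((2:ℂ)^m * (m.factorial : ℂ)) * ∏ k : Fin m, A (ev m k) (od m k) := by
  classical
  have hsub : (univ.image (fun p : Equiv.Perm (Fin m) × (Fin m → Bool) => phi p.1 p.2))
      ⊆ (univ : Finset (Equiv.Perm (Fin (2*m)))) := Finset.subset_univ _
  have hzero : ∀ σ ∈ (univ : Finset (Equiv.Perm (Fin (2*m)))),
      σ ∉ (univ.image (fun p : Equiv.Perm (Fin m) × (Fin m → Bool) => phi p.1 p.2)) →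
      Term A σ = 0 := by
    intro σ _ hσim
    by_cases hgood : ∀ k : Fin m, ((σ (od m k) : ℕ) = (σ (ev m k) : ℕ) + 1
        ∨ (σ (ev m k) : ℕ) = (σ (od m k) : ℕ) + 1)
    · obtain ⟨τ, ε, hτε⟩ := good_mem σ hgood
      exact absurd (Finset.mem_image.mpr ⟨(τ, ε), mem_univ _, hτε.symm⟩) hσim
    · exact term_eq_zero A hA σ hgood
  rw [← Finset.sum_subset hsub hzero,
    Finset.sum_image (fun p _ q _ h => phi_inj p q h)]
  have hterm : ∀ p : Equiv.Perm (Fin m) × (Fin m → Bool),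
      Term A (phi p.1 p.2) = ∏ k : Fin m, A (ev m k) (od m k) := by
    intro p; rw [term_phi A hskew, term_one]
  rw [Finset.sum_congr rfl (fun p _ => hterm p), Finset.sum_const, Finset.card_univ,
    Fintype.card_prod, Fintype.card_perm, Fintype.card_fun, Fintype.card_fin,
    Fintype.card_bool]
  rw [nsmul_eq_mul]
  push_cast
  ring


lemma consec {m n : ℕ} {μ : Fin (2*m) → Fin (2*n)} (hμ : StrictMono μ)
    {i j : Fin (2*m)} (h : (μ j : ℕ) = (μ i : ℕ) + 1) : (j:ℕ) = (i:ℕ) + 1 := by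
  have hij : i < j := hμ.lt_iff_lt.mp (Fin.lt_def.mpr (by omega))
  by_contra hne
  have hlt : (i:ℕ) + 1 < (j:ℕ) := by have := Fin.lt_def.mp hij; omega
  have hi1 : (i:ℕ) + 1 < 2*m := lt_trans hlt j.isLt
  have h1 : μ i < μ ⟨(i:ℕ)+1, hi1⟩ := hμ (Fin.lt_def.mpr (by simp))
  have h2 : μ ⟨(i:ℕ)+1, hi1⟩ < μ j := hμ (Fin.lt_def.mpr (by simpa using hlt))
  rw [Fin.lt_def] at h1 h2
  omega

lemma pfaffian_eq {m : ℕ} (A : Matrix (Fin (2*m)) (Fin (2*m)) ℂ)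
    (hA : ∀ i j : Fin (2*m), ((j:ℕ) ≠ (i:ℕ)+1) → ((i:ℕ) ≠ (j:ℕ)+1) → A i j = 0)
    (hskew : ∀ i j, A j i = - A i j) :
    pfaffian m A = ∏ k : Fin m, A (ev m k) (od m k) := by
  have h : pfaffian m A
      = ((2:ℂ)^m * (m.factorial : ℂ))⁻¹ * ∑ σ : Equiv.Perm (Fin (2*m)), Term A σ := rfl
  rw [h, pf_core A hA hskew, ← mul_assoc, inv_mul_cancel₀, one_mul]
  exact mul_ne_zero (pow_ne_zero _ two_ne_zero) (Nat.cast_ne_zero.mpr m.factorial_ne_zero)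

end SubPf

/-- for a skew-symmetric tridiagonal `2n × 2n` matrix `B` with
superdiagonal entries `α` and any strictly increasing selection
`μ : Fin (2m) → Fin (2n)` of rows/columns, the sub-Pfaffian `Pf(B^μ_μ)` vanishes
unless `μ_{2k} = μ_{2k-1} + 1` for all `k`, in which case it equals
`∏_k α_{μ_{2k-1}}`. -/
theorem subPfaffian_tridiagonal (n m : ℕ) (hm : 0 < m) (hmn : m ≤ n) (α : ℕ → ℂ)
    (B : Matrix (Fin (2 * n)) (Fin (2 * n)) ℂ)
    (hB : ∀ i j : Fin (2 * n), B i j =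
      if (j : ℕ) = (i : ℕ) + 1 then α ((i : ℕ) + 1)
      else if (i : ℕ) = (j : ℕ) + 1 then -α ((j : ℕ) + 1)
      else 0)
    (μ : Fin (2 * m) → Fin (2 * n)) (hμ : StrictMono μ) :
    ((∀ k : Fin m,
        (μ ⟨2 * (k : ℕ) + 1, by have := k.isLt; omega⟩ : ℕ) =
          (μ ⟨2 * (k : ℕ), by have := k.isLt; omega⟩ : ℕ) + 1) →
      pfaffian m (B.submatrix μ μ) =
        ∏ k : Fin m, α ((μ ⟨2 * (k : ℕ), by have := k.isLt; omega⟩ : ℕ) + 1)) ∧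
    ((¬ ∀ k : Fin m,
        (μ ⟨2 * (k : ℕ) + 1, by have := k.isLt; omega⟩ : ℕ) =
          (μ ⟨2 * (k : ℕ), by have := k.isLt; omega⟩ : ℕ) + 1) →
      pfaffian m (B.submatrix μ μ) = 0) := by
  classical
  have hAtri : ∀ i j : Fin (2*m), ((j:ℕ) ≠ (i:ℕ)+1) → ((i:ℕ) ≠ (j:ℕ)+1) →
      (B.submatrix μ μ) i j = 0 := by
    intro i j h1 h2
    show B (μ i) (μ j) = 0
    rw [hB]
    split_ifs with hb1 hb2
    · exact absurd (SubPf.consec hμ hb1) h1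
    · exact absurd (SubPf.consec hμ hb2) h2
    · rfl
  have hskewA : ∀ i j : Fin (2*m), (B.submatrix μ μ) j i = - (B.submatrix μ μ) i j := by
    intro i j
    show B (μ j) (μ i) = - B (μ i) (μ j)
    rw [hB, hB]
    split_ifs <;> first | (exfalso; omega) | ring
  constructor
  · intro hcons
    rw [SubPf.pfaffian_eq (B.submatrix μ μ) hAtri hskewA]
    apply Finset.prod_congr rfl
    intro k _
    show B (μ (SubPf.ev m k)) (μ (SubPf.od m k)) = α ((μ (SubPf.ev m k) : ℕ) + 1)
    rw [hB, if_pos (show ((μ (SubPf.od m k)) : ℕ) = ((μ (SubPf.ev m k)) : ℕ) + 1 from hcons k)]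
  · intro hncons
    push_neg at hncons
    obtain ⟨k, hk⟩ := hncons
    rw [SubPf.pfaffian_eq (B.submatrix μ μ) hAtri hskewA]
    apply Finset.prod_eq_zero (Finset.mem_univ k)
    show B (μ (SubPf.ev m k)) (μ (SubPf.od m k)) = 0
    have hlt : (μ (SubPf.ev m k) : ℕ) < (μ (SubPf.od m k) : ℕ) :=
      Fin.lt_def.mp (hμ (Fin.lt_def.mpr (by simp [SubPf.ev, SubPf.od])))
    rw [hB, if_neg (show ¬ ((μ (SubPf.od m k)) : ℕ) = ((μ (SubPf.ev m k)) : ℕ) + 1 from hk),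
      if_neg (by omega)]
end
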